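/- arXiv:2009.05374 — 4 statements merged into one kernel-verified Lean document; each statement's English description precedes it below -/
import Mathlib

section
/- Let {x,z} = {q,−1}, let (R^q_{u,w}) and (R^{−1}_{u,w}) be the two families of Kazhdan–Lusztig R-polynomials of a pircon system (P,S), both satisfying the up-down symmetry, and let (P^z_{u,w}) be the Kazhdan–Lusztig–Stanley polynomials of (R^z_{u,w}). Then ι^x(C'^x_w) = C'^x_w for every w ∈ P. -/
open Polynomial LaurentPolynomial

noncomputable section

/-- A quasi special partial matching of a poset `P`: an involution `M : P → P` such that
for every `t`, either `M t ⋖ t`, `M t = t`, or `t ⋖ M t`, and whenever `t ⋖ u` and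
`M t ≠ u`, then `M t < M u`. -/
def IsQSPM {P : Type*} [PartialOrder P] (M : P → P) : Prop :=
  Function.Involutive M ∧
  (∀ t : P, M t ⋖ t ∨ M t = t ∨ t ⋖ M t) ∧
  ∀ t u : P, t ⋖ u → M t ≠ u → M t < M u

/-- A quasi special partial matching of the order ideal `P_{≤w}`. -/
def IsQSPMOn {P : Type*} [PartialOrder P] (w : P) (M : P → P) : Prop :=
  (∀ u : P, u ≤ w → M u ≤ w) ∧
  (∀ u : P, u ≤ w → M (M u) = u) ∧
  (∀ u : P, u ≤ w → M u ⋖ u ∨ M u = u ∨ u ⋖ M u) ∧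
  ∀ u t : P, u ≤ w → t ≤ w → u ⋖ t → M u ≠ t → M u < M t

/-- A special partial matching of the order ideal `P_{≤w}` (whose maximum is `w`). -/
def IsSPMOn {P : Type*} [PartialOrder P] (w : P) (M : P → P) : Prop :=
  IsQSPMOn w M ∧ M w ⋖ w

/-- A pircon: for every non-minimal `x`, the order ideal `P_{≤x}` is finite and admits
a special partial matching. -/
def IsPircon (P : Type*) [PartialOrder P] : Prop :=
  ∀ x : P, ¬ IsMin x → (Set.Iic x).Finite ∧ ∃ M : P → P, IsSPMOn x M

/-- A pircon system `(P,S)`: `S` is a set of quasi special partial matchings of `P` such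
that every `w ≠ ⊥` is matched downwards by some `M ∈ S`. -/
def IsPirconSystem {P : Type*} [PartialOrder P] [OrderBot P] (S : Set (P → P)) : Prop :=
  (∀ M ∈ S, IsQSPM M) ∧ ∀ w : P, w ≠ ⊥ → ∃ M ∈ S, M w ⋖ w

/-- The defining properties of the family of Kazhdan--Lusztig `R^x`-polynomials of a
pircon system `(P,S)`, where `x ∈ {q,-1} ⊆ ℤ[q]` (here `q` is the variable `X`). -/
def IsKLRFamily {P : Type*} [PartialOrder P] (S : Set (P → P)) (x : Polynomial ℤ)
    (R : P → P → Polynomial ℤ) : Prop :=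
  (∀ u w : P, ¬ u ≤ w → R u w = 0) ∧
  (∀ w : P, R w w = 1) ∧
  ∀ M ∈ S, ∀ u w : P, M w ⋖ w →
    (M u ⋖ u → R u w = R (M u) (M w)) ∧
    (u ⋖ M u → R u w = (X - 1) * R u (M w) + X * R (M u) (M w)) ∧
    (M u = u → R u w = (X - 1 - x) * R u (M w))

/-- The up-down symmetry for a family of Kazhdan--Lusztig `R^x`-polynomials. -/
def UpDownSymmetry {P : Type*} [PartialOrder P] (S : Set (P → P)) (x : Polynomial ℤ)
    (R : P → P → Polynomial ℤ) : Prop :=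
  ∀ M ∈ S, ∀ u w : P, u ⋖ M u →
    (w ⋖ M w → R u w = R (M u) (M w)) ∧
    (M w ⋖ w → R u w = (X - 1) * R (M u) w + X * R (M u) (M w)) ∧
    (M w = w → R u w = (X - 1 - x) * R (M u) w)

/-!  The ring `A = ℤ[q^{1/2}, q^{-1/2}]` is realized as `LaurentPolynomial ℤ`, with
`q^{1/2} = T 1` and hence `q = T 2`; the bar involution `q^{1/2} ↦ q^{-1/2}` is
`LaurentPolynomial.invert`.  The free `A`-module `𝓜_P = ⊕_{u ∈ P} A·m_u` is realized as
the finitely supported elements of `P → A`, the basis element `m_u` corresponding to the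
indicator of `u`. -/

/-- Evaluation of a polynomial in `q` at `q = T 2`, i.e. the inclusion
`ℤ[q] → ℤ[q^{1/2}, q^{-1/2}]`. -/
def evq (p : Polynomial ℤ) : LaurentPolynomial ℤ :=
  Polynomial.aeval (T 2 : LaurentPolynomial ℤ) p

open Classical in
/-- The `y`-action of the operator `T_M` on `𝓜_P`, written in coordinates:
`T_M(m_v) = m_{M v}` if `v ⋖ M v`; `T_M(m_v) = q·m_{M v} + (q-1)·m_v` if `M v ⋖ v`;
and `T_M(m_v) = y·m_v` if `M v = v`. -/
def TMact {P : Type*} [PartialOrder P] (M : P → P) (y : LaurentPolynomial ℤ)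
    (f : P → LaurentPolynomial ℤ) : P → LaurentPolynomial ℤ := fun u =>
  if M u = u then y * f u
  else if M u < u then f (M u) + (T 2 - 1) * f u
  else T 2 * f (M u)

/-- The map `ι^x` on `𝓜_P`, written in coordinates:
`ι^x(Σ_v f_v·m_v) = Σ_v f̄_v·q^{-ρ(v)}·Σ_{u} (-1)^{ρ(u,v)}·R^x_{u,v}(q)·m_u`. -/
def iotaAct {P : Type*} [PartialOrder P] (ρ : P → ℕ) (R : P → P → Polynomial ℤ)
    (f : P → LaurentPolynomial ℤ) : P → LaurentPolynomial ℤ := fun u =>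
  ∑ᶠ v : P, invert (f v) * (T (-2 * (ρ v : ℤ)) * ((-1) ^ (ρ v - ρ u) * evq (R u v)))

/-- The involution `j_P` of `𝓜_P`: `j_P(a·m_w) = ā·(-q^{-1})^{ρ(w)}·m_w`. -/
def jPact {P : Type*} [PartialOrder P] (ρ : P → ℕ) (f : P → LaurentPolynomial ℤ) :
    P → LaurentPolynomial ℤ := fun w => invert (f w) * (-T (-2)) ^ (ρ w)

/-- `deg f < k/2`. -/
def DegLtHalf (f : Polynomial ℤ) (k : ℤ) : Prop :=
  f = 0 ∨ 2 * (f.natDegree : ℤ) < k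

/-- The Kazhdan--Lusztig--Stanley polynomials of the kernel `(R_{u,w})`: `P_{u,w} = 0`
unless `u ≤ w`, `P_{w,w} = 1`, `deg P_{u,w} < ρ(u,w)/2` for `u < w`, and
`q^{ρ(u,w)}·P_{u,w}(q⁻¹) = Σ_{u ≤ t ≤ w} R_{u,t}(q)·P_{t,w}(q)`. -/
def IsKLSFamily {P : Type*} [PartialOrder P] (ρ : P → ℕ)
    (R Pp : P → P → Polynomial ℤ) : Prop :=
  (∀ u w : P, ¬ u ≤ w → Pp u w = 0) ∧
  (∀ w : P, Pp w w = 1) ∧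
  (∀ u w : P, u < w → DegLtHalf (Pp u w) ((ρ w : ℤ) - (ρ u : ℤ))) ∧
  ∀ u w : P, u ≤ w →
    T (2 * ((ρ w : ℤ) - (ρ u : ℤ))) * invert (evq (Pp u w)) =
      ∑ᶠ t ∈ Set.Icc u w, evq (R u t) * evq (Pp t w)

/-- The Kazhdan--Lusztig element `C^x_w ∈ 𝓜_P`, in coordinates: its coefficient on `m_v`
is `q^{ρ(w)/2}·(-1)^{ρ(v,w)}·q^{-ρ(v)}·P^x_{v,w}(q^{-1})`. -/
def Cel {P : Type*} [PartialOrder P] (ρ : P → ℕ) (Pp : P → P → Polynomial ℤ) (w : P) :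
    P → LaurentPolynomial ℤ := fun v =>
  T (ρ w : ℤ) * ((-1) ^ (ρ w - ρ v) * (T (-2 * (ρ v : ℤ)) * invert (evq (Pp v w))))

/-- The Kazhdan--Lusztig element `C'^x_w ∈ 𝓜_P`, in coordinates: its coefficient on
`m_v` is `q^{-ρ(w)/2}·P^z_{v,w}(q)` (the family `Pp` fed here is `P^z`). -/
def Cel' {P : Type*} [PartialOrder P] (ρ : P → ℕ) (Pp : P → P → Polynomial ℤ) (w : P) :
    P → LaurentPolynomial ℤ := fun v =>
  T (-(ρ w : ℤ)) * evq (Pp v w)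

section
open Function

section Aux
variable {P : Type*} [PartialOrder P]

private lemma rho_lt (ρ : P → ℕ) (hρcov : ∀ a b : P, a ⋖ b → ρ b = ρ a + 1) :
    ∀ (n : ℕ) (a b : P), (Set.Iic b).Finite → a < b → (Set.Ioo a b).ncard = n → ρ a < ρ b := by
  intro n
  induction n using Nat.strong_induction_on with
  | _ n ih =>
    intro a b hfin hab hcard
    rcases Set.eq_empty_or_nonempty (Set.Ioo a b) with he | ⟨c, hac, hcb⟩
    · have hcov : a ⋖ b :=
        ⟨hab, fun c h1 h2 => (Set.eq_empty_iff_forall_notMem.mp he c) ⟨h1, h2⟩⟩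
      rw [hρcov a b hcov]; omega
    · have hfinIoo : (Set.Ioo a b).Finite := hfin.subset (fun y hy => le_of_lt hy.2)
      have h1 : (Set.Ioo a c) ⊂ (Set.Ioo a b) := by
        constructor
        · exact fun y hy => ⟨hy.1, hy.2.trans hcb⟩
        · intro hsub
          exact absurd (hsub ⟨hac, hcb⟩).2 (lt_irrefl c)
      have h2 : (Set.Ioo c b) ⊂ (Set.Ioo a b) := by
        constructor
        · exact fun y hy => ⟨hac.trans hy.1, hy.2⟩
        · intro hsub
          exact absurd (hsub ⟨hac, hcb⟩).1 (lt_irrefl c)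
      have c1 := Set.ncard_lt_ncard h1 hfinIoo
      have c2 := Set.ncard_lt_ncard h2 hfinIoo
      have r1 := ih _ (hcard ▸ c1) a c (hfin.subset fun y hy => hy.trans hcb.le) hac rfl
      have r2 := ih _ (hcard ▸ c2) c b hfin hcb rfl
      omega

private lemma rho_le (ρ : P → ℕ) (hρcov : ∀ a b : P, a ⋖ b → ρ b = ρ a + 1)
    {a b : P} (hfin : (Set.Iic b).Finite) (hab : a ≤ b) : ρ a ≤ ρ b := by
  rcases eq_or_lt_of_le hab with rfl | h
  · exact le_rfl
  · exact (rho_lt ρ hρcov _ a b hfin h rfl).le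

end Aux

section KeyA
open Classical in

private lemma keyA {P : Type*} [PartialOrder P] [OrderBot P]
    (ρ : P → ℕ) (hρcov : ∀ a b : P, a ⋖ b → ρ b = ρ a + 1)
    (hfin : ∀ y : P, (Set.Iic y).Finite)
    {S : Set (P → P)} (hS : IsPirconSystem S)
    {x z : Polynomial ℤ} (hxz : (x = X ∧ z = -1) ∨ (x = -1 ∧ z = X))
    {Rx Rz : P → P → Polynomial ℤ}
    (hRx : IsKLRFamily S x Rx) (hRz : IsKLRFamily S z Rz)
    (hudx : UpDownSymmetry S x Rx) :
    ∀ (t u : P), (∑ᶠ v : P, (-1 : Polynomial ℤ) ^ ρ v * (Rx u v * Rz v t)) =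
      if u = t then (-1) ^ ρ t else 0 := by
  suffices h : ∀ (n : ℕ) (t : P), ρ t = n → ∀ u : P,
      (∑ᶠ v : P, (-1 : Polynomial ℤ) ^ ρ v * (Rx u v * Rz v t)) =
        if u = t then (-1) ^ ρ t else 0 by
    intro t u; exact h (ρ t) t rfl u
  intro n
  induction n using Nat.strong_induction_on with
  | _ n ih =>
  intro t hn u
  by_cases hut : u = t
  · subst hut
    rw [if_pos rfl, finsum_eq_single _ u, hRx.2.1 u, hRz.2.1 u]
    · ring
    · intro v hv
      by_cases h1 : u ≤ v
      · by_cases h2 : v ≤ u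
        · exact absurd (le_antisymm h2 h1) hv
        · rw [hRz.1 v u h2]; ring
      · rw [hRx.1 u v h1]; ring
  · rw [if_neg hut]
    by_cases htbot : t = ⊥
    · subst htbot
      have hz0 : ∀ v : P, (-1 : Polynomial ℤ) ^ ρ v * (Rx u v * Rz v ⊥) = 0 := by
        intro v
        by_cases h2 : v ≤ ⊥
        · have hv : v = ⊥ := le_bot_iff.mp h2
          subst hv
          rw [hRx.1 u ⊥ (fun h => hut (le_bot_iff.mp h))]; ring
        · rw [hRz.1 v ⊥ h2]; ring
      rw [finsum_congr hz0, finsum_zero]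
    obtain ⟨M, hMS, hMt⟩ := hS.2 t htbot
    obtain ⟨hinv, htri, -⟩ := hS.1 M hMS
    have hrt : ρ t = ρ (M t) + 1 := hρcov (M t) t hMt
    have hx1 : X - 1 - z = x := by
      rcases hxz with ⟨hx, hz⟩ | ⟨hx, hz⟩ <;> subst hx <;> subst hz <;> ring
    have hx2 : X - 1 - x = z := by
      rcases hxz with ⟨hx, hz⟩ | ⟨hx, hz⟩ <;> subst hx <;> subst hz <;> ring
    have hx3 : x * z = -X := by
      rcases hxz with ⟨hx, hz⟩ | ⟨hx, hz⟩ <;> subst hx <;> subst hz <;> ring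
    have hsupgen : ∀ (t0 : P) (F : P → Polynomial ℤ), (∀ v, ¬ v ≤ t0 → F v = 0) →
        (Function.support F).Finite := by
      intro t0 F hF
      apply (hfin t0).subset
      intro v hv
      rw [Set.mem_Iic]; by_contra hvt; exact hv (hF v hvt)
    set f : P → Polynomial ℤ := fun v => (-1 : Polynomial ℤ) ^ ρ v * (Rx u v * Rz v t)
      with hfdef
    have hsupf : (Function.support f).Finite :=
      hsupgen t f (fun v hv => by simp only [hfdef]; rw [hRz.1 v t hv]; ring)
    have step : ∀ g : P → Polynomial ℤ, (Function.support g).Finite →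
        (∀ v, f v + f (M v) = g v + g (M v)) → (∑ᶠ v, f v) = ∑ᶠ v, g v := by
      intro g hsupg hpair
      have hfM : (Function.support fun v => f (M v)).Finite := by
        apply (hsupf.image M).subset
        intro v hv
        exact ⟨M v, hv, hinv v⟩
      have hgM : (Function.support fun v => g (M v)).Finite := by
        apply (hsupg.image M).subset
        intro v hv
        exact ⟨M v, hv, hinv v⟩
      have e1 : (∑ᶠ v, f (M v)) = ∑ᶠ v, f v := finsum_comp_equiv (Involutive.toPerm M hinv)
      have e2 : (∑ᶠ v, g (M v)) = ∑ᶠ v, g v := finsum_comp_equiv (Involutive.toPerm M hinv)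
      have key : (∑ᶠ v, f v) + (∑ᶠ v, f v) = (∑ᶠ v, g v) + (∑ᶠ v, g v) := by
        calc (∑ᶠ v, f v) + (∑ᶠ v, f v)
            = (∑ᶠ v, f v) + (∑ᶠ v, f (M v)) := by rw [e1]
          _ = ∑ᶠ v, (f v + f (M v)) := (finsum_add_distrib hsupf hfM).symm
          _ = ∑ᶠ v, (g v + g (M v)) := finsum_congr hpair
          _ = (∑ᶠ v, g v) + (∑ᶠ v, g (M v)) := finsum_add_distrib hsupg hgM
          _ = (∑ᶠ v, g v) + (∑ᶠ v, g v) := by rw [e2]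
      have h2 : (2 : Polynomial ℤ) * (∑ᶠ v, f v) = 2 * ∑ᶠ v, g v := by
        rw [two_mul, two_mul]; exact key
      exact mul_left_cancel₀ (by norm_num) h2
    have pairstep : ∀ g : P → Polynomial ℤ,
        (∀ v, M v = v → f v = g v) →
        (∀ v, v ⋖ M v → f v + f (M v) = g v + g (M v)) →
        ∀ v, f v + f (M v) = g v + g (M v) := by
      intro g hfix hup v
      rcases htri v with hd | hfx | hu
      · have hcov : M v ⋖ M (M v) := by rw [hinv v]; exact hd
        have h := hup (M v) hcov
        rw [hinv v] at h
        linear_combination h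
      · rw [hfx, hfix v hfx]
      · exact hup v hu
    have hMuMt : M u ≠ M t := by
      intro h
      have := congrArg M h
      rw [hinv, hinv] at this
      exact hut this
    rcases htri u with hd | hfxu | hu
    · -- Case C : M u ⋖ u
      have hud : M u ⋖ M (M u) := by rw [hinv u]; exact hd
      set g : P → Polynomial ℤ := fun v =>
        (-1 : Polynomial ℤ) ^ ρ v * (((X - 1) * Rx u v - Rx (M u) v) * Rz v (M t)) with hgdef
      have hsupg : (Function.support g).Finite :=
        hsupgen (M t) g (fun v hv => by simp only [hgdef]; rw [hRz.1 v (M t) hv]; ring)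
      have hpair : ∀ v, f v + f (M v) = g v + g (M v) := by
        apply pairstep
        · intro v hfxv
          have eRz : Rz v t = (X - 1 - z) * Rz v (M t) := (hRz.2.2 M hMS v t hMt).2.2 hfxv
          have eRx : Rx (M u) v = (X - 1 - x) * Rx u v := by
            have h := (hudx M hMS (M u) v hud).2.2 hfxv
            rwa [hinv u] at h
          simp only [hfdef, hgdef]
          rw [eRz, eRx]
          linear_combination ((-1 : Polynomial ℤ) ^ ρ v * (Rx u v * Rz v (M t))) * hx1
        · intro v hv
          have hsv : ρ (M v) = ρ v + 1 := hρcov v (M v) hv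
          have hvv : M (M v) ⋖ M v := by rw [hinv v]; exact hv
          have eRz1 : Rz v t = (X - 1) * Rz v (M t) + X * Rz (M v) (M t) :=
            (hRz.2.2 M hMS v t hMt).2.1 hv
          have eRz2 : Rz (M v) t = Rz v (M t) := by
            have h := (hRz.2.2 M hMS (M v) t hMt).1 hvv
            rwa [hinv v] at h
          have eRx1 : Rx u (M v) = Rx (M u) v := by
            have h := (hRx.2.2 M hMS u (M v) hvv).1 hd
            rwa [hinv v] at h
          have eRx2 : Rx (M u) (M v) = (X - 1) * Rx (M u) v + X * Rx u v := by
            have h := (hRx.2.2 M hMS (M u) (M v) hvv).2.1 hud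
            rwa [hinv u, hinv v] at h
          simp only [hfdef, hgdef]
          rw [hsv, eRz1, eRz2, eRx1, eRx2, pow_succ]
          ring
      have hsup1 : (Function.support fun v =>
          (-1 : Polynomial ℤ) ^ ρ v * (Rx u v * Rz v (M t))).Finite :=
        hsupgen (M t) _ (fun v hv => by rw [hRz.1 v (M t) hv]; ring)
      have hsup2 : (Function.support fun v =>
          (-1 : Polynomial ℤ) ^ ρ v * (Rx (M u) v * Rz v (M t))).Finite :=
        hsupgen (M t) _ (fun v hv => by rw [hRz.1 v (M t) hv]; ring)
      have huMt : u ≠ M t := by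
        intro h
        have h1 : t ⋖ M t := by have h2 := hd; rw [h] at h2; rwa [hinv] at h2
        exact absurd hMt.lt (asymm h1.lt)
      calc (∑ᶠ v, f v) = ∑ᶠ v, g v := step g hsupg hpair
        _ = ∑ᶠ v, ((X - 1) * ((-1 : Polynomial ℤ) ^ ρ v * (Rx u v * Rz v (M t))) -
              (-1 : Polynomial ℤ) ^ ρ v * (Rx (M u) v * Rz v (M t))) := by
            apply finsum_congr
            intro v
            simp only [hgdef]
            ring
        _ = (∑ᶠ v, (X - 1) * ((-1 : Polynomial ℤ) ^ ρ v * (Rx u v * Rz v (M t)))) -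
              ∑ᶠ v, (-1 : Polynomial ℤ) ^ ρ v * (Rx (M u) v * Rz v (M t)) := by
            exact finsum_sub_distrib (hsup1.subset (Function.support_mul_subset_right _ _)) hsup2
        _ = (X - 1) * (∑ᶠ v, (-1 : Polynomial ℤ) ^ ρ v * (Rx u v * Rz v (M t))) -
              ∑ᶠ v, (-1 : Polynomial ℤ) ^ ρ v * (Rx (M u) v * Rz v (M t)) := by
            rw [mul_finsum _ _]
        _ = 0 := by
            rw [ih (ρ (M t)) (by omega) (M t) rfl u, ih (ρ (M t)) (by omega) (M t) rfl (M u),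
              if_neg huMt, if_neg hMuMt]
            ring
    · -- Case B : M u = u
      set g : P → Polynomial ℤ := fun v =>
        x * ((-1 : Polynomial ℤ) ^ ρ v * (Rx u v * Rz v (M t))) with hgdef
      have hsupg : (Function.support g).Finite :=
        hsupgen (M t) g (fun v hv => by simp only [hgdef]; rw [hRz.1 v (M t) hv]; ring)
      have hpair : ∀ v, f v + f (M v) = g v + g (M v) := by
        apply pairstep
        · intro v hfxv
          have eRz : Rz v t = (X - 1 - z) * Rz v (M t) := (hRz.2.2 M hMS v t hMt).2.2 hfxv
          simp only [hfdef, hgdef]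
          rw [eRz]
          linear_combination ((-1 : Polynomial ℤ) ^ ρ v * (Rx u v * Rz v (M t))) * hx1
        · intro v hv
          have hsv : ρ (M v) = ρ v + 1 := hρcov v (M v) hv
          have hvv : M (M v) ⋖ M v := by rw [hinv v]; exact hv
          have eRz1 : Rz v t = (X - 1) * Rz v (M t) + X * Rz (M v) (M t) :=
            (hRz.2.2 M hMS v t hMt).2.1 hv
          have eRz2 : Rz (M v) t = Rz v (M t) := by
            have h := (hRz.2.2 M hMS (M v) t hMt).1 hvv
            rwa [hinv v] at h
          have eRx : Rx u (M v) = (X - 1 - x) * Rx u v := by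
            have h := (hRx.2.2 M hMS u (M v) hvv).2.2 hfxu
            rwa [hinv v] at h
          have hB : x * (X - 1 - x) = -X := by rw [hx2]; exact hx3
          simp only [hfdef, hgdef]
          rw [hsv, eRz1, eRz2, eRx, pow_succ]
          linear_combination ((-1 : Polynomial ℤ) ^ ρ v * (Rx u v * Rz (M v) (M t))) * hB
      have hsup1 : (Function.support fun v =>
          (-1 : Polynomial ℤ) ^ ρ v * (Rx u v * Rz v (M t))).Finite :=
        hsupgen (M t) _ (fun v hv => by rw [hRz.1 v (M t) hv]; ring)
      have huMt : u ≠ M t := by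
        intro h
        apply hut
        have := congrArg M h
        rw [hfxu, hinv] at this
        exact this
      calc (∑ᶠ v, f v) = ∑ᶠ v, g v := step g hsupg hpair
        _ = x * ∑ᶠ v, (-1 : Polynomial ℤ) ^ ρ v * (Rx u v * Rz v (M t)) :=
            (mul_finsum _ _).symm
        _ = 0 := by rw [ih (ρ (M t)) (by omega) (M t) rfl u, if_neg huMt]; ring
    · -- Case A : u ⋖ M u
      set g : P → Polynomial ℤ := fun v =>
        -X * ((-1 : Polynomial ℤ) ^ ρ v * (Rx (M u) v * Rz v (M t))) with hgdef
      have hsupg : (Function.support g).Finite :=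
        hsupgen (M t) g (fun v hv => by simp only [hgdef]; rw [hRz.1 v (M t) hv]; ring)
      have hpair : ∀ v, f v + f (M v) = g v + g (M v) := by
        apply pairstep
        · intro v hfxv
          have eRz : Rz v t = (X - 1 - z) * Rz v (M t) := (hRz.2.2 M hMS v t hMt).2.2 hfxv
          have eRx : Rx u v = (X - 1 - x) * Rx (M u) v := (hudx M hMS u v hu).2.2 hfxv
          have hprod : (X - 1 - x) * (X - 1 - z) = -X := by rw [hx1, hx2, mul_comm]; exact hx3
          simp only [hfdef, hgdef]
          rw [eRz, eRx]
          linear_combination ((-1 : Polynomial ℤ) ^ ρ v * (Rx (M u) v * Rz v (M t))) * hprod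
        · intro v hv
          have hsv : ρ (M v) = ρ v + 1 := hρcov v (M v) hv
          have hvv : M (M v) ⋖ M v := by rw [hinv v]; exact hv
          have eRz1 : Rz v t = (X - 1) * Rz v (M t) + X * Rz (M v) (M t) :=
            (hRz.2.2 M hMS v t hMt).2.1 hv
          have eRz2 : Rz (M v) t = Rz v (M t) := by
            have h := (hRz.2.2 M hMS (M v) t hMt).1 hvv
            rwa [hinv v] at h
          have eRx1 : Rx u v = Rx (M u) (M v) := (hudx M hMS u v hu).1 hv
          have eRx2 : Rx u (M v) = (X - 1) * Rx (M u) (M v) + X * Rx (M u) v := by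
            have h := (hudx M hMS u (M v) hu).2.1 hvv
            rwa [hinv v] at h
          simp only [hfdef, hgdef]
          rw [hsv, eRz1, eRz2, eRx2, eRx1, pow_succ]
          ring
      have hsup1 : (Function.support fun v =>
          (-1 : Polynomial ℤ) ^ ρ v * (Rx (M u) v * Rz v (M t))).Finite :=
        hsupgen (M t) _ (fun v hv => by rw [hRz.1 v (M t) hv]; ring)
      calc (∑ᶠ v, f v) = ∑ᶠ v, g v := step g hsupg hpair
        _ = -X * ∑ᶠ v, (-1 : Polynomial ℤ) ^ ρ v * (Rx (M u) v * Rz v (M t)) :=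
            (mul_finsum _ _).symm
        _ = 0 := by rw [ih (ρ (M t)) (by omega) (M t) rfl (M u), if_neg hMuMt]; ring

end KeyA
end

/-- The Kazhdan--Lusztig element `C'^x_w = q^{-ρ(w)/2}·Σ_{v ≤ w} P^z_{v,w}(q)·m_v` is
invariant under `ι^x`. -/
theorem iota_Cel' {P : Type*} [PartialOrder P] [OrderBot P]
    (ρ : P → ℕ) (hρ0 : ρ (⊥ : P) = 0) (hρcov : ∀ a b : P, a ⋖ b → ρ b = ρ a + 1)
    (hP : IsPircon P) {S : Set (P → P)} (hS : IsPirconSystem S)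
    {x z : Polynomial ℤ} (hxz : (x = X ∧ z = -1) ∨ (x = -1 ∧ z = X))
    {Rx Rz : P → P → Polynomial ℤ}
    (hRx : IsKLRFamily S x Rx) (hRz : IsKLRFamily S z Rz)
    (hudx : UpDownSymmetry S x Rx) (hudz : UpDownSymmetry S z Rz)
    {Pz : P → P → Polynomial ℤ} (hPz : IsKLSFamily ρ Rz Pz)
    (w : P) :
    iotaAct ρ Rx (Cel' ρ Pz w) = Cel' ρ Pz w := by
  classical
  have hfin : ∀ y : P, (Set.Iic y).Finite := by
    intro y
    by_cases h : IsMin y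
    · have hy : Set.Iic y = {y} :=
        Set.eq_singleton_iff_unique_mem.mpr ⟨le_rfl, fun a ha => le_antisymm ha (h ha)⟩
      rw [hy]; exact Set.finite_singleton y
    · exact (hP y h).1
  have hxz' : (x = X ∧ z = -1) ∨ (x = -1 ∧ z = X) := hxz
  have hkey := keyA ρ hρcov hfin hS hxz hRx hRz hudx
  funext u
  show (∑ᶠ v : P, invert (Cel' ρ Pz w v) *
      (T (-2 * (ρ v : ℤ)) * ((-1) ^ (ρ v - ρ u) * evq (Rx u v)))) = Cel' ρ Pz w u
  simp only [Cel']
  by_cases huw : u ≤ w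
  · -- main case
    set s : Finset P := (hfin w).toFinset with hsdef
    have hmem : ∀ {a : P}, a ∈ s ↔ a ≤ w := by
      intro a
      rw [hsdef, Set.Finite.mem_toFinset, Set.mem_Iic]
    have hcoe : (↑s : Set P) = Set.Iic w := Set.Finite.coe_toFinset _
    -- inner delta
    have hinner : ∀ t ∈ s, (∑ v ∈ s, ((-1 : LaurentPolynomial ℤ) ^ (ρ v - ρ u) *
        (evq (Rx u v) * evq (Rz v t)))) = if u = t then 1 else 0 := by
      intro t ht
      have hconv : ∀ v ∈ s, ((-1 : LaurentPolynomial ℤ) ^ (ρ v - ρ u) *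
          (evq (Rx u v) * evq (Rz v t))) =
          evq ((-1 : Polynomial ℤ) ^ ρ u * ((-1) ^ ρ v * (Rx u v * Rz v t))) := by
        intro v hv
        by_cases h1 : u ≤ v
        · have h2 : ρ u ≤ ρ v := rho_le ρ hρcov (hfin v) h1
          have hkeypow : ((-1 : LaurentPolynomial ℤ)) ^ (ρ v - ρ u) =
              (-1) ^ ρ u * (-1) ^ ρ v := by
            have h4 : ((-1 : LaurentPolynomial ℤ)) ^ ρ u * (-1) ^ ρ u = 1 := by
              rw [← pow_add]
              exact Even.neg_one_pow ⟨ρ u, by omega⟩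
            calc ((-1 : LaurentPolynomial ℤ)) ^ (ρ v - ρ u)
                = (-1) ^ (ρ v - ρ u) * ((-1) ^ ρ u * (-1) ^ ρ u) := by rw [h4, mul_one]
              _ = (-1) ^ ρ u * (-1) ^ ρ v := by
                  rw [← pow_add, ← pow_add, ← pow_add]
                  congr 1
                  omega
          rw [hkeypow]
          simp only [evq, map_mul, map_pow, map_neg, map_one]
          ring
        · rw [hRx.1 u v h1]
          simp only [evq, map_mul, map_zero, mul_zero, zero_mul, map_pow, map_neg, map_one]
      rw [Finset.sum_congr rfl hconv]
      have hE : (∑ v ∈ s, evq ((-1 : Polynomial ℤ) ^ ρ u * ((-1) ^ ρ v * (Rx u v * Rz v t)))) =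
          evq (∑ v ∈ s, (-1 : Polynomial ℤ) ^ ρ u * ((-1) ^ ρ v * (Rx u v * Rz v t))) := by
        simp only [evq]
        exact (map_sum _ _ _).symm
      rw [hE, ← Finset.mul_sum]
      have hfs : (∑ v ∈ s, ((-1 : Polynomial ℤ) ^ ρ v * (Rx u v * Rz v t))) =
          ∑ᶠ v : P, ((-1 : Polynomial ℤ) ^ ρ v * (Rx u v * Rz v t)) := by
        symm
        apply finsum_eq_sum_of_support_subset
        intro v hv
        have hvt : v ≤ t := by
          by_contra hvt
          apply hv
          show (-1 : Polynomial ℤ) ^ ρ v * (Rx u v * Rz v t) = 0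
          rw [hRz.1 v t hvt]; ring
        rw [Finset.mem_coe, hmem]
        exact hvt.trans (hmem.mp ht)
      rw [hfs, hkey t u]
      by_cases hu : u = t
      · subst hu
        rw [if_pos rfl, if_pos rfl]
        have hone : ((-1 : Polynomial ℤ) ^ ρ u * (-1) ^ ρ u) = 1 := by
          rw [← pow_add]
          exact Even.neg_one_pow ⟨ρ u, by omega⟩
        rw [hone]
        simp [evq]
      · rw [if_neg hu, if_neg hu, mul_zero]
        simp [evq]
    have hA : (Function.support fun v => invert (T (-(ρ w : ℤ)) * evq (Pz v w)) *
        (T (-2 * (ρ v : ℤ)) * ((-1) ^ (ρ v - ρ u) * evq (Rx u v)))) ⊆ ↑s := by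
      intro v hv
      rw [Finset.mem_coe, hmem]
      by_contra hvw
      apply hv
      show invert (T (-(ρ w : ℤ)) * evq (Pz v w)) *
        (T (-2 * (ρ v : ℤ)) * ((-1) ^ (ρ v - ρ u) * evq (Rx u v))) = 0
      rw [hPz.1 v w hvw]
      simp [evq]
    rw [finsum_eq_sum_of_support_subset _ hA]
    have hAv : ∀ v ∈ s, invert (T (-(ρ w : ℤ)) * evq (Pz v w)) *
        (T (-2 * (ρ v : ℤ)) * ((-1) ^ (ρ v - ρ u) * evq (Rx u v))) =
        ∑ t ∈ s, (T (-(ρ w : ℤ)) * evq (Pz t w)) *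
          ((-1 : LaurentPolynomial ℤ) ^ (ρ v - ρ u) * (evq (Rx u v) * evq (Rz v t))) := by
      intro v hv
      have hvw : v ≤ w := hmem.mp hv
      have hIccfin : (Set.Icc v w).Finite := (hfin w).subset (fun a ha => ha.2)
      have h1 : (∑ᶠ t ∈ Set.Icc v w, evq (Rz v t) * evq (Pz t w)) =
          ∑ t ∈ hIccfin.toFinset, evq (Rz v t) * evq (Pz t w) :=
        finsum_mem_eq_finite_toFinset_sum _ hIccfin
      have h2 : (∑ t ∈ hIccfin.toFinset, evq (Rz v t) * evq (Pz t w)) =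
          ∑ t ∈ s, evq (Rz v t) * evq (Pz t w) := by
        apply Finset.sum_subset
        · intro a ha
          rw [Set.Finite.mem_toFinset] at ha
          exact hmem.mpr ha.2
        · intro a ha hna
          have hnva : ¬ v ≤ a := by
            intro hva
            exact hna (hIccfin.mem_toFinset.mpr ⟨hva, hmem.mp ha⟩)
          rw [hRz.1 v a hnva]
          simp [evq]
      have h0 := hPz.2.2.2 v w hvw
      rw [h1, h2] at h0
      have hPid : invert (evq (Pz v w)) =
          T (-(2 * ((ρ w : ℤ) - (ρ v : ℤ)))) * ∑ t ∈ s, evq (Rz v t) * evq (Pz t w) := by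
        calc invert (evq (Pz v w))
            = (T (-(2 * ((ρ w : ℤ) - (ρ v : ℤ)))) * T (2 * ((ρ w : ℤ) - (ρ v : ℤ)))) *
              invert (evq (Pz v w)) := by
              rw [← T_add, neg_add_cancel, T_zero, one_mul]
          _ = T (-(2 * ((ρ w : ℤ) - (ρ v : ℤ)))) *
              (T (2 * ((ρ w : ℤ) - (ρ v : ℤ))) * invert (evq (Pz v w))) := by ring
          _ = _ := by rw [h0]
      have h3 : invert (T (-(ρ w : ℤ)) * evq (Pz v w)) =
          T ((ρ w : ℤ)) * invert (evq (Pz v w)) := by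
        rw [map_mul, invert_T, neg_neg]
      have hT : (T ((ρ w : ℤ)) : LaurentPolynomial ℤ) * T (-(2 * ((ρ w : ℤ) - (ρ v : ℤ)))) *
          T (-2 * (ρ v : ℤ)) = T (-(ρ w : ℤ)) := by
        rw [← T_add, ← T_add]
        congr 1
        ring
      calc invert (T (-(ρ w : ℤ)) * evq (Pz v w)) *
          (T (-2 * (ρ v : ℤ)) * ((-1) ^ (ρ v - ρ u) * evq (Rx u v)))
          = (T ((ρ w : ℤ)) * T (-(2 * ((ρ w : ℤ) - (ρ v : ℤ)))) * T (-2 * (ρ v : ℤ))) *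
            ((∑ t ∈ s, evq (Rz v t) * evq (Pz t w)) *
              ((-1) ^ (ρ v - ρ u) * evq (Rx u v))) := by
            rw [h3, hPid]; ring
        _ = T (-(ρ w : ℤ)) * ((∑ t ∈ s, evq (Rz v t) * evq (Pz t w)) *
              ((-1) ^ (ρ v - ρ u) * evq (Rx u v))) := by rw [hT]
        _ = ∑ t ∈ s, (T (-(ρ w : ℤ)) * evq (Pz t w)) *
            ((-1 : LaurentPolynomial ℤ) ^ (ρ v - ρ u) * (evq (Rx u v) * evq (Rz v t))) := by
            rw [Finset.sum_mul, Finset.mul_sum]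
            apply Finset.sum_congr rfl
            intro t ht
            ring
    rw [Finset.sum_congr rfl hAv, Finset.sum_comm]
    have hfinal : ∀ t ∈ s, (∑ v ∈ s, (T (-(ρ w : ℤ)) * evq (Pz t w)) *
        ((-1 : LaurentPolynomial ℤ) ^ (ρ v - ρ u) * (evq (Rx u v) * evq (Rz v t)))) =
        if u = t then T (-(ρ w : ℤ)) * evq (Pz t w) else 0 := by
      intro t ht
      rw [← Finset.mul_sum, hinner t ht]
      by_cases hu : u = t
      · rw [if_pos hu, if_pos hu, mul_one]
      · rw [if_neg hu, if_neg hu, mul_zero]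
    rw [Finset.sum_congr rfl hfinal, Finset.sum_ite_eq, if_pos (hmem.mpr huw)]
  · -- case ¬ u ≤ w

    have hzero : ∀ v : P, invert (T (-(ρ w : ℤ)) * evq (Pz v w)) *
        (T (-2 * (ρ v : ℤ)) * ((-1) ^ (ρ v - ρ u) * evq (Rx u v))) = 0 := by
      intro v
      by_cases h1 : u ≤ v
      · have h2 : ¬ v ≤ w := fun h => huw (h1.trans h)
        rw [hPz.1 v w h2]
        simp [evq]
      · rw [hRx.1 u v h1]
        simp [evq]
    rw [finsum_congr hzero, finsum_zero, hPz.1 u w huw]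
    simp [evq]


end
end

section
/- Let {x,z} = {q,−1}, let (R^q_{u,w}) and (R^{−1}_{u,w}) be the two families of Kazhdan–Lusztig R-polynomials of a pircon system (P,S), both satisfying the up-down symmetry, and let (P^x_{u,w}) be the Kazhdan–Lusztig–Stanley polynomials of (R^x_{u,w}). Then ι^x(C^x_w) = C^x_w for every w ∈ P. -/
open Polynomial LaurentPolynomial

noncomputable section

private lemma rho_mono_aux {P : Type*} [PartialOrder P] (ρ : P → ℕ)
    (hρcov : ∀ a b : P, a ⋖ b → ρ b = ρ a + 1) :
    ∀ n : ℕ, ∀ u v : P, u ≤ v → ∀ h : (Set.Icc u v).Finite,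
      h.toFinset.card ≤ n → ρ u ≤ ρ v := by
  intro n
  induction n with
  | zero =>
    intro u v huv h hc
    exact absurd (Finset.card_pos.mpr ⟨u, h.mem_toFinset.mpr ⟨le_refl u, huv⟩⟩) (by omega)
  | succ n ih =>
    intro u v huv h hc
    rcases eq_or_lt_of_le huv with rfl | hlt
    · exact le_refl _
    · have hsfin : (Set.Icc u v \ {v}).Finite := h.subset Set.diff_subset
      have hne : (Set.Icc u v \ {v}).Nonempty :=
        ⟨u, ⟨⟨le_refl u, huv⟩, by simp [ne_of_lt hlt]⟩⟩
      obtain ⟨c, hcmem, hcmax⟩ := hsfin.exists_maximalFor id _ hne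
      obtain ⟨⟨huc, hcv⟩, hcne⟩ := hcmem
      have hcv' : c < v := lt_of_le_of_ne hcv (by simpa using hcne)
      have hcov : c ⋖ v := by
        refine ⟨hcv', fun t hct htv => ?_⟩
        have htmem : t ∈ Set.Icc u v \ {v} :=
          ⟨⟨le_trans huc hct.le, htv.le⟩, by simp [ne_of_lt htv]⟩
        exact absurd (hcmax htmem hct.le) hct.not_ge
      have hρv : ρ v = ρ c + 1 := hρcov c v hcov
      have hfin2 : (Set.Icc u c).Finite := h.subset (Set.Icc_subset_Icc_right hcv)
      have hcard : hfin2.toFinset.card ≤ n := by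
        have hsub : hfin2.toFinset ⊂ h.toFinset := by
          refine ⟨fun t ht => ?_, fun hcon => ?_⟩
          · rw [Set.Finite.mem_toFinset] at ht ⊢
            exact ⟨ht.1, le_trans ht.2 hcv⟩
          · have hv : v ∈ h.toFinset := h.mem_toFinset.mpr ⟨huv, le_refl v⟩
            have := hfin2.mem_toFinset.mp (hcon hv)
            exact absurd this.2 hcv'.not_ge
        have := Finset.card_lt_card hsub
        omega
      exact le_trans (ih u c huc hfin2 hcard) (by omega)

/-- The Kazhdan--Lusztig element
`C^x_w = q^{ρ(w)/2}·Σ_{v ≤ w} (-1)^{ρ(v,w)}·q^{-ρ(v)}·P^x_{v,w}(q^{-1})·m_v` is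
invariant under `ι^x`. -/
theorem iota_Cel {P : Type*} [PartialOrder P] [OrderBot P]
    (ρ : P → ℕ) (hρ0 : ρ (⊥ : P) = 0) (hρcov : ∀ a b : P, a ⋖ b → ρ b = ρ a + 1)
    (hP : IsPircon P) {S : Set (P → P)} (hS : IsPirconSystem S)
    {x z : Polynomial ℤ} (hxz : (x = X ∧ z = -1) ∨ (x = -1 ∧ z = X))
    {Rx Rz : P → P → Polynomial ℤ}
    (hRx : IsKLRFamily S x Rx) (hRz : IsKLRFamily S z Rz)
    (hudx : UpDownSymmetry S x Rx) (hudz : UpDownSymmetry S z Rz)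
    {Px : P → P → Polynomial ℤ} (hPx : IsKLSFamily ρ Rx Px)
    (w : P) :
    iotaAct ρ Rx (Cel ρ Px w) = Cel ρ Px w := by
  classical
  have hmono : ∀ a b : P, a ≤ b → (Set.Icc a b).Finite → ρ a ≤ ρ b :=
    fun a b hab hf => rho_mono_aux ρ hρcov hf.toFinset.card a b hab hf le_rfl
  have hRx0 := hRx.1
  have hPx0 := hPx.1
  have hsum := hPx.2.2.2
  funext u
  set g : P → LaurentPolynomial ℤ := fun v =>
    invert (Cel ρ Px w v) *
      (T (-2 * (ρ v : ℤ)) * ((-1) ^ (ρ v - ρ u) * evq (Rx u v))) with hg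
  have hiota : iotaAct ρ Rx (Cel ρ Px w) u = ∑ᶠ v, g v := rfl
  have hzero : ∀ v : P, ¬(u ≤ v ∧ v ≤ w) → g v = 0 := by
    intro v hv
    by_cases h1 : u ≤ v
    · have h2 : ¬ v ≤ w := fun h2 => hv ⟨h1, h2⟩
      have h0 : Px v w = 0 := hPx0 v w h2
      simp [hg, Cel, h0, evq]
    · have h0 : Rx u v = 0 := hRx0 u v h1
      simp [hg, h0, evq]
  by_cases huw : u ≤ w
  · have hfin : (Set.Icc u w).Finite := by
      by_cases hw : IsMin w
      · exact (Set.finite_singleton w).subset fun t ht => le_antisymm ht.2 (hw ht.2)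
      · exact ((hP w hw).1).subset Set.Icc_subset_Iic_self
    have hsupp : Function.support g ⊆ ↑hfin.toFinset := by
      intro v hv
      rw [Set.Finite.coe_toFinset]
      by_contra h
      exact hv (hzero v (by simpa [Set.mem_Icc] using h))
    have hterm : ∀ v ∈ hfin.toFinset, g v =
        (T (-(ρ w : ℤ)) * (-1 : LaurentPolynomial ℤ) ^ (ρ w - ρ u)) *
          (evq (Rx u v) * evq (Px v w)) := by
      intro v hv
      rw [Set.Finite.mem_toFinset] at hv
      obtain ⟨h1, h2⟩ := hv
      have hr1 : ρ u ≤ ρ v := hmono u v h1 (hfin.subset (Set.Icc_subset_Icc_right h2))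
      have hr2 : ρ v ≤ ρ w := hmono v w h2 (hfin.subset (Set.Icc_subset_Icc_left h1))
      have hpow : ((-1 : LaurentPolynomial ℤ)) ^ (ρ w - ρ v) * (-1) ^ (ρ v - ρ u)
          = (-1) ^ (ρ w - ρ u) := by
        rw [← pow_add]; congr 1; omega
      have hT : (T (2 * (ρ v : ℤ)) : LaurentPolynomial ℤ) * T (-2 * (ρ v : ℤ)) = 1 := by
        rw [← T_add]
        norm_num [T_zero]
      have hinv2 : invert (invert (evq (Px v w))) = evq (Px v w) :=
        LaurentPolynomial.involutive_invert (evq (Px v w))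
      calc g v = (T (-(ρ w : ℤ)) * ((-1) ^ (ρ w - ρ v) * (T (2 * (ρ v : ℤ)) * evq (Px v w)))) *
            (T (-2 * (ρ v : ℤ)) * ((-1) ^ (ρ v - ρ u) * evq (Rx u v))) := by
            rw [hg]
            simp only [Cel, map_mul, map_pow, map_neg, map_one, invert_T, hinv2,
              neg_mul, neg_neg]
        _ = (T (-(ρ w : ℤ)) * ((-1) ^ (ρ w - ρ v) * (-1) ^ (ρ v - ρ u))) *
            ((T (2 * (ρ v : ℤ)) * T (-2 * (ρ v : ℤ))) * (evq (Rx u v) * evq (Px v w))) := by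
            ring
        _ = _ := by rw [hpow, hT, one_mul]
    have hstep : (∑ᶠ v, g v) =
        (T (-(ρ w : ℤ)) * (-1 : LaurentPolynomial ℤ) ^ (ρ w - ρ u)) *
          ∑ᶠ v ∈ Set.Icc u w, evq (Rx u v) * evq (Px v w) := by
      rw [finsum_eq_sum_of_support_subset g hsupp, Finset.sum_congr rfl hterm,
        ← Finset.mul_sum, ← finsum_mem_coe_finset, Set.Finite.coe_toFinset]
    rw [hiota, hstep, ← hsum u w huw]
    have hT2 : (T (-(ρ w : ℤ)) : LaurentPolynomial ℤ) * T (2 * ((ρ w : ℤ) - (ρ u : ℤ)))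
        = T ((ρ w : ℤ)) * T (-2 * (ρ u : ℤ)) := by
      rw [← T_add, ← T_add]; congr 1; ring
    calc (T (-(ρ w : ℤ)) * (-1 : LaurentPolynomial ℤ) ^ (ρ w - ρ u)) *
          (T (2 * ((ρ w : ℤ) - (ρ u : ℤ))) * invert (evq (Px u w)))
        = (T (-(ρ w : ℤ)) * T (2 * ((ρ w : ℤ) - (ρ u : ℤ)))) *
            ((-1) ^ (ρ w - ρ u) * invert (evq (Px u w))) := by ring
      _ = (T ((ρ w : ℤ)) * T (-2 * (ρ u : ℤ))) *
            ((-1) ^ (ρ w - ρ u) * invert (evq (Px u w))) := by rw [hT2]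
      _ = Cel ρ Px w u := by rw [Cel]; ring
  · have hz : ∀ v, g v = 0 := fun v =>
      hzero v (fun h => huw (le_trans h.1 h.2))
    rw [hiota, finsum_eq_zero_of_forall_eq_zero hz]
    have h0 : Px u w = 0 := hPx0 u w huw
    simp [Cel, h0, evq]

end
end

section
/- Characterization of the Kazhdan–Lusztig basis elements: Let {x,z} = {q,−1}, let (R^q_{u,w}) and (R^{−1}_{u,w}) be the two families of Kazhdan–Lusztig R-polynomials of a pircon system (P,S), both satisfying the up-down symmetry, and let (P^z_{u,w}) be the Kazhdan–Lusztig–Stanley polynomials of (R^z_{u,w}). Suppose D ∈ 𝓜_P and w ∈ P satisfy: (1) ι^x(D) = D; and (2) D = q^{−ρ(w)/2}·Σ_{v∈P} Q_{v,w}·m_v, where each Q_{v,w} ∈ ℤ[q], Q_{v,w} = 0 for all but finitely many v, Q_{w,w} = 1, and deg Q_{v,w} < ρ(v,w)/2 for every v ≠ w. Then Q_{v,w} = P^z_{v,w} for all v ∈ P; that is, D = C'^x_w. -/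
open Polynomial LaurentPolynomial

noncomputable section

section Helpers

open Function

lemma evq_zero : evq 0 = 0 := by simp [evq]
lemma evq_one : evq 1 = 1 := by simp [evq]
lemma evq_add (p q : Polynomial ℤ) : evq (p + q) = evq p + evq q := by simp [evq]
lemma evq_sub (p q : Polynomial ℤ) : evq (p - q) = evq p - evq q := by simp [evq]
lemma evq_mul (p q : Polynomial ℤ) : evq (p * q) = evq p * evq q := by simp [evq]
lemma evq_X : evq X = T 2 := by simp [evq]
lemma evq_neg_one : evq (-1) = -1 := by simp [evq]

lemma T_mul_T (a b : ℤ) : (T a : LaurentPolynomial ℤ) * T b = T (a + b) := (T_add a b).symm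

lemma invert_evq_X : invert (evq X) = T (-2) := by rw [evq_X, invert_T]

lemma evq_apply (p : Polynomial ℤ) (n : ℕ) :
    (evq p).coeff (2 * (n : ℤ)) = p.coeff n := by
  induction p using Polynomial.induction_on' with
  | add p q hp hq =>
      rw [evq_add, Polynomial.coeff_add, ← hp, ← hq, AddMonoidAlgebra.coeff_add]
      exact Finsupp.add_apply _ _ _
  | monomial m a =>
      have h1 : evq (Polynomial.monomial m a) = AddMonoidAlgebra.single ((m : ℤ) * 2) a := by
        unfold evq
        rw [Polynomial.aeval_monomial, T_pow, single_eq_C_mul_T]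
        congr 1
      rw [h1, AddMonoidAlgebra.coeff_single, Polynomial.coeff_monomial]
      by_cases h : m = n
      · subst h
        rw [Finsupp.single_apply, if_pos (by ring), if_pos rfl]
      · rw [Finsupp.single_apply, if_neg (by omega), if_neg h]

lemma key_contradiction (p : Polynomial ℤ) (hp : p ≠ 0) (k : ℤ)
    (hk : 2 * (p.natDegree : ℤ) < k)
    (heq : evq p = T (2 * k) * invert (evq p)) : False := by
  set d := p.natDegree with hd
  set t := p.natTrailingDegree with ht
  have htd : t ≤ d := Polynomial.natTrailingDegree_le_natDegree p
  have hco : p.coeff t ≠ 0 := Polynomial.coeff_natTrailingDegree_ne_zero.mpr hp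
  set j : ℕ := (k - t).toNat with hj
  have hjz : (j : ℤ) = k - t := Int.toNat_of_nonneg (by omega)
  have hdj : d < j := by omega
  have h1 : (evq p).coeff (2 * (j : ℤ)) = 0 := by
    rw [evq_apply]
    exact Polynomial.coeff_eq_zero_of_natDegree_lt hdj
  have h2 : (T (2 * k) * invert (evq p) : LaurentPolynomial ℤ).coeff (2 * (j : ℤ)) = p.coeff t := by
    have hT : (T (2 * k) : LaurentPolynomial ℤ) = AddMonoidAlgebra.single (2 * k) 1 := rfl
    rw [hT, AddMonoidAlgebra.coeff_single_mul_apply, one_mul, invert_apply]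
    have he : -(-(2 * k) + 2 * (j : ℤ)) = 2 * (t : ℤ) := by omega
    rw [he, evq_apply]
  rw [heq, h2] at h1
  exact hco h1

end Helpers
section OrderHelpers

variable {P : Type*} [PartialOrder P] [OrderBot P]

lemma iic_finite (hP : IsPircon P) (v : P) : (Set.Iic v).Finite := by
  by_cases h : IsMin v
  · have hv : v = ⊥ := le_antisymm (h bot_le) bot_le
    subst hv
    simp only [Set.Iic_bot]
    exact Set.finite_singleton _
  · exact (hP v h).1

lemma rho_lt_s18 (ρ : P → ℕ) (hρcov : ∀ a b : P, a ⋖ b → ρ b = ρ a + 1)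
    (hP : IsPircon P) : ∀ u v : P, u < v → ρ u < ρ v := by
  have main : ∀ n : ℕ, ∀ u v : P, u < v → (Set.Ioc u v).ncard ≤ n → ρ u < ρ v := by
    intro n
    induction n with
    | zero =>
        intro u v huv hcard
        exfalso
        have hfin : (Set.Ioc u v).Finite := (iic_finite hP v).subset Set.Ioc_subset_Iic_self
        have hne : (Set.Ioc u v).Nonempty := ⟨v, huv, le_rfl⟩
        have := (Set.ncard_pos hfin).mpr hne
        omega
    | succ n IH =>
        intro u v huv hcard
        have hfin : (Set.Ioc u v).Finite := (iic_finite hP v).subset Set.Ioc_subset_Iic_self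
        have hne : (Set.Ioc u v).Nonempty := ⟨v, huv, le_rfl⟩
        obtain ⟨t, hts, htmin⟩ := Set.Finite.exists_minimalFor id _ hfin hne
        have hcov : u ⋖ t := by
          refine ⟨hts.1, fun c huc hct => ?_⟩
          have hc : c ∈ Set.Ioc u v := ⟨huc, le_of_lt (lt_of_lt_of_le hct hts.2)⟩
          have := htmin hc (le_of_lt hct)
          simp only [id] at this
          exact absurd this hct.not_ge
        have hρt : ρ t = ρ u + 1 := hρcov u t hcov
        rcases eq_or_lt_of_le hts.2 with rfl | htv
        · omega
        · have hsub : Set.Ioc t v ⊂ Set.Ioc u v := by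
            constructor
            · intro a ha
              exact ⟨lt_trans hts.1 ha.1, ha.2⟩
            · intro hcon
              have := hcon ⟨hts.1, hts.2⟩
              exact absurd this.1 (lt_irrefl t)
          have hlt : (Set.Ioc t v).ncard < (Set.Ioc u v).ncard :=
            Set.ncard_lt_ncard hsub hfin
          have := IH t v htv (by omega)
          omega
  intro u v huv
  exact main _ u v huv le_rfl

lemma rho_mono (ρ : P → ℕ) (hρcov : ∀ a b : P, a ⋖ b → ρ b = ρ a + 1)
    (hP : IsPircon P) {u v : P} (h : u ≤ v) : ρ u ≤ ρ v := by
  rcases eq_or_lt_of_le h with rfl | h'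
  · exact le_refl _
  · exact le_of_lt (rho_lt_s18 ρ hρcov hP u v h')

end OrderHelpers
section Duality

lemma evq_X_sub_one : evq (X - 1) = T 2 - 1 := by rw [evq_sub, evq_one, evq_X]

lemma keyfix {x z : Polynomial ℤ} (hxz : (x = X ∧ z = -1) ∨ (x = -1 ∧ z = X)) :
    (T 2 : LaurentPolynomial ℤ) * invert (evq (X - 1 - x)) = - evq (X - 1 - z) := by
  rcases hxz with ⟨rfl, rfl⟩ | ⟨rfl, rfl⟩
  · rw [show (X - 1 - X : Polynomial ℤ) = -1 from by ring,
        show (X - 1 - (-1) : Polynomial ℤ) = X from by ring, evq_neg_one, evq_X]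
    simp
  · rw [show (X - 1 - (-1) : Polynomial ℤ) = X from by ring,
        show (X - 1 - X : Polynomial ℤ) = -1 from by ring, evq_neg_one, evq_X, invert_T,
        T_mul_T]
    norm_num

lemma dual_aux {P : Type*} [PartialOrder P] [OrderBot P] (ρ : P → ℕ)
    (hρcov : ∀ a b : P, a ⋖ b → ρ b = ρ a + 1) (hP : IsPircon P)
    {S : Set (P → P)} (hS : IsPirconSystem S)
    {x z : Polynomial ℤ} (hxz : (x = X ∧ z = -1) ∨ (x = -1 ∧ z = X))
    {Rx Rz : P → P → Polynomial ℤ} (hRx : IsKLRFamily S x Rx) (hRz : IsKLRFamily S z Rz) :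
    ∀ u v : P, u ≤ v →
      T (2 * ((ρ v : ℤ) - (ρ u : ℤ))) * invert (evq (Rx u v)) =
        (-1) ^ (ρ v - ρ u) * evq (Rz u v) := by
  suffices H : ∀ n : ℕ, ∀ v : P, ρ v = n → ∀ u : P, u ≤ v →
      T (2 * ((ρ v : ℤ) - (ρ u : ℤ))) * invert (evq (Rx u v)) =
        (-1) ^ (ρ v - ρ u) * evq (Rz u v) by
    intro u v h; exact H (ρ v) v rfl u h
  intro n
  induction n using Nat.strong_induction_on with
  | _ n IH =>
  intro v hv u huv
  subst hv
  by_cases hvbot : v = ⊥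
  · subst hvbot
    have hu : u = ⊥ := le_bot_iff.mp huv
    subst hu
    rw [hRx.2.1, hRz.2.1]
    simp [evq_one]
  · obtain ⟨M, hMS, hMv⟩ := hS.2 v hvbot
    have hρv : ρ v = ρ (M v) + 1 := hρcov _ _ hMv
    have hTT : (T 2 : LaurentPolynomial ℤ) * T (-2) = 1 := by rw [T_mul_T]; norm_num
    rcases (hS.1 M hMS).2.1 u with hdown | hfix | hup
    · -- M u ⋖ u
      have hx1 := ((hRx.2.2 M hMS u v hMv).1) hdown
      have hz1 := ((hRz.2.2 M hMS u v hMv).1) hdown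
      have hρu : ρ u = ρ (M u) + 1 := hρcov _ _ hdown
      rw [hx1, hz1]
      by_cases hle : M u ≤ M v
      · have IH1 := IH (ρ (M v)) (by omega) (M v) rfl (M u) hle
        rw [show 2 * ((ρ v : ℤ) - (ρ u : ℤ)) = 2 * ((ρ (M v) : ℤ) - (ρ (M u) : ℤ)) from
              by omega,
            show ρ v - ρ u = ρ (M v) - ρ (M u) from by omega]
        exact IH1
      · rw [hRx.1 _ _ hle, hRz.1 _ _ hle, evq_zero]
        simp
    · -- M u = u
      have hx1 := ((hRx.2.2 M hMS u v hMv).2.2) hfix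
      have hz1 := ((hRz.2.2 M hMS u v hMv).2.2) hfix
      rw [hx1, hz1]
      by_cases hle : u ≤ M v
      · have IH1 := IH (ρ (M v)) (by omega) (M v) rfl u hle
        have hm : ρ u ≤ ρ (M v) := rho_mono ρ hρcov hP hle
        have hkf := keyfix hxz
        rw [evq_mul, evq_mul, map_mul,
            show 2 * ((ρ v : ℤ) - (ρ u : ℤ)) = 2 + 2 * ((ρ (M v) : ℤ) - (ρ u : ℤ)) from
              by omega, ← T_mul_T,
            show ρ v - ρ u = (ρ (M v) - ρ u) + 1 from by omega, pow_succ]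
        linear_combination (T (2 * ((ρ (M v) : ℤ) - (ρ u : ℤ))) * invert (evq (Rx u (M v)))) * hkf
          - evq (X - 1 - z) * IH1
      · rw [hRx.1 _ _ hle, hRz.1 _ _ hle]
        simp [evq_mul, evq_zero]
    · -- u ⋖ M u
      have hx1 := ((hRx.2.2 M hMS u v hMv).2.1) hup
      have hz1 := ((hRz.2.2 M hMS u v hMv).2.1) hup
      have hρMu : ρ (M u) = ρ u + 1 := hρcov _ _ hup
      rw [hx1, hz1]
      simp only [evq_add, evq_mul, evq_X_sub_one, evq_X, map_add, map_mul, map_sub,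
        map_one, invert_T]
      by_cases hle1 : u ≤ M v <;> by_cases hle2 : M u ≤ M v
      · have hm1 : ρ u ≤ ρ (M v) := rho_mono ρ hρcov hP hle1
        have hm2 : ρ (M u) ≤ ρ (M v) := rho_mono ρ hρcov hP hle2
        have IH1 := IH (ρ (M v)) (by omega) (M v) rfl u hle1
        have IH2 := IH (ρ (M v)) (by omega) (M v) rfl (M u) hle2
        rw [show 2 * ((ρ (M v) : ℤ) - (ρ u : ℤ))
              = 2 + 2 * ((ρ (M v) : ℤ) - (ρ (M u) : ℤ)) from by omega, ← T_mul_T,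
            show ρ (M v) - ρ u = (ρ (M v) - ρ (M u)) + 1 from by omega, pow_succ] at IH1
        rw [show 2 * ((ρ v : ℤ) - (ρ u : ℤ))
              = 2 + (2 + 2 * ((ρ (M v) : ℤ) - (ρ (M u) : ℤ))) from by omega,
            ← T_mul_T, ← T_mul_T,
            show ρ v - ρ u = (ρ (M v) - ρ (M u)) + 1 + 1 from by omega, pow_succ, pow_succ]
        linear_combination (T 2 * T (-2) - T 2) * IH1 + T 2 * IH2
          + (T 2 * T (2 * ((ρ (M v) : ℤ) - (ρ (M u) : ℤ))) * invert (evq (Rx (M u) (M v)))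
             - (-1) ^ (ρ (M v) - ρ (M u)) * evq (Rz u (M v))) * hTT
      · have hm1 : ρ u ≤ ρ (M v) := rho_mono ρ hρcov hP hle1
        have IH1 := IH (ρ (M v)) (by omega) (M v) rfl u hle1
        rw [hRx.1 _ _ hle2, hRz.1 _ _ hle2, evq_zero]
        rw [show 2 * ((ρ v : ℤ) - (ρ u : ℤ))
              = 2 + 2 * ((ρ (M v) : ℤ) - (ρ u : ℤ)) from by omega, ← T_mul_T,
            show ρ v - ρ u = (ρ (M v) - ρ u) + 1 from by omega, pow_succ]
        simp only [map_zero, mul_zero, add_zero]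
        linear_combination (T 2 * T (-2) - T 2) * IH1
          + ((-1) ^ (ρ (M v) - ρ u) * evq (Rz u (M v))) * hTT
      · have hm2 : ρ (M u) ≤ ρ (M v) := rho_mono ρ hρcov hP hle2
        have IH2 := IH (ρ (M v)) (by omega) (M v) rfl (M u) hle2
        rw [hRx.1 _ _ hle1, hRz.1 _ _ hle1, evq_zero]
        rw [show 2 * ((ρ v : ℤ) - (ρ u : ℤ))
              = 2 + (2 + 2 * ((ρ (M v) : ℤ) - (ρ (M u) : ℤ))) from by omega,
            ← T_mul_T, ← T_mul_T,
            show ρ v - ρ u = (ρ (M v) - ρ (M u)) + 1 + 1 from by omega, pow_succ, pow_succ]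
        simp only [map_zero, mul_zero, zero_add, zero_mul]
        linear_combination T 2 * IH2
          + (T 2 * T (2 * ((ρ (M v) : ℤ) - (ρ (M u) : ℤ)))
             * invert (evq (Rx (M u) (M v)))) * hTT
      · rw [hRx.1 _ _ hle1, hRz.1 _ _ hle1, hRx.1 _ _ hle2, hRz.1 _ _ hle2, evq_zero]
        simp

end Duality
lemma invert_finsum {α : Type*} (f : α → LaurentPolynomial ℤ)
    (hf : (Function.support f).Finite) :
    invert (∑ᶠ i, f i) = ∑ᶠ i, invert (f i) := by
  simpa using ((invert (R := ℤ)).toAddEquiv.toAddMonoidHom).map_finsum hf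

/-- Characterization of the Kazhdan--Lusztig basis elements: if `D ∈ 𝓜_P` is
`ι^x`-invariant and `D = q^{-ρ(w)/2}·Σ_v Q_{v,w}·m_v` with `Q_{v,w} ∈ ℤ[q]` finitely
supported, `Q_{w,w} = 1` and `deg Q_{v,w} < ρ(v,w)/2` for `v ≠ w`, then
`Q_{v,w} = P^z_{v,w}` for every `v`, i.e. `D = C'^x_w`. -/
theorem Cel'_characterization {P : Type*} [PartialOrder P] [OrderBot P]
    (ρ : P → ℕ) (hρ0 : ρ (⊥ : P) = 0) (hρcov : ∀ a b : P, a ⋖ b → ρ b = ρ a + 1)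
    (hP : IsPircon P) {S : Set (P → P)} (hS : IsPirconSystem S)
    {x z : Polynomial ℤ} (hxz : (x = X ∧ z = -1) ∨ (x = -1 ∧ z = X))
    {Rx Rz : P → P → Polynomial ℤ}
    (hRx : IsKLRFamily S x Rx) (hRz : IsKLRFamily S z Rz)
    (hudx : UpDownSymmetry S x Rx) (hudz : UpDownSymmetry S z Rz)
    {Pz : P → P → Polynomial ℤ} (hPz : IsKLSFamily ρ Rz Pz)
    (w : P) (D : P → LaurentPolynomial ℤ) (Q : P → Polynomial ℤ)
    (hQfin : (Function.support Q).Finite)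
    (hD : D = fun v => T (-(ρ w : ℤ)) * evq (Q v))
    (hiota : iotaAct ρ Rx D = D)
    (hQw : Q w = 1)
    (hdeg : ∀ v : P, v ≠ w → DegLtHalf (Q v) ((ρ w : ℤ) - (ρ v : ℤ))) :
    ∀ v : P, Q v = Pz v w := by
  classical
  have hxz' : (z = X ∧ x = -1) ∨ (z = -1 ∧ x = X) := by tauto
  subst hD
  have hIicw : (Set.Iic w).Finite := iic_finite hP w
  -- Step 1: the invariance equation in terms of Rz.
  have star : ∀ u : P, (∑ᶠ v : P, evq (Rz u v) * evq (Q v))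
      = T (2 * ((ρ w : ℤ) - (ρ u : ℤ))) * invert (evq (Q u)) := by
    intro u
    have hi := congrFun hiota u
    unfold iotaAct at hi
    simp only at hi
    have hcong : ∀ v : P,
        invert (T (-(ρ w : ℤ)) * evq (Q v)) *
          (T (-2 * (ρ v : ℤ)) * ((-1) ^ (ρ v - ρ u) * evq (Rx u v)))
          = T ((ρ w : ℤ) - 2 * (ρ u : ℤ)) * invert (evq (Rz u v) * evq (Q v)) := by
      intro v
      by_cases huv : u ≤ v
      · have hd := dual_aux ρ hρcov hP hS hxz' hRz hRx u v huv
        rw [map_mul, invert_T, map_mul, ← hd,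
            show T ((ρ w : ℤ) - 2 * (ρ u : ℤ))
              = T (-(-(ρ w : ℤ))) * (T (-2 * (ρ v : ℤ)) * T (2 * ((ρ v : ℤ) - (ρ u : ℤ))))
              from by rw [T_mul_T, T_mul_T]; congr 1; ring]
        ring
      · rw [hRx.1 _ _ huv, hRz.1 _ _ huv, evq_zero]
        simp
    rw [finsum_congr hcong] at hi
    have hfin2 : (Function.support fun v => invert (evq (Rz u v) * evq (Q v))).Finite := by
      apply hQfin.subset
      intro v hv
      simp only [Function.mem_support] at hv ⊢
      intro h0
      exact hv (by rw [h0, evq_zero, mul_zero, map_zero])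
    have hfin3 : (Function.support fun v => evq (Rz u v) * evq (Q v)).Finite := by
      apply hQfin.subset
      intro v hv
      simp only [Function.mem_support] at hv ⊢
      intro h0
      exact hv (by rw [h0, evq_zero, mul_zero])
    rw [← mul_finsum' _ _ hfin2, ← invert_finsum _ hfin3] at hi
    have hinv : invert (∑ᶠ v : P, evq (Rz u v) * evq (Q v))
        = T (2 * (ρ u : ℤ) - (ρ w : ℤ)) * (T (-(ρ w : ℤ)) * evq (Q u)) := by
      rw [← hi, ← mul_assoc, T_mul_T,
          show 2 * (ρ u : ℤ) - (ρ w : ℤ) + ((ρ w : ℤ) - 2 * (ρ u : ℤ)) = 0 from by ring,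
          T_zero, one_mul]
    have h2 := congrArg invert hinv
    rw [involutive_invert _] at h2
    rw [h2, map_mul, map_mul, invert_T, invert_T, ← mul_assoc, T_mul_T]
    rw [show -(2 * (ρ u : ℤ) - (ρ w : ℤ)) + -(-(ρ w : ℤ)) = 2 * ((ρ w : ℤ) - (ρ u : ℤ))
          from by ring]
  -- Step 2: the KLS defining equation, extended to a sum over all of `P`.
  have star2 : ∀ u : P, (∑ᶠ v : P, evq (Rz u v) * evq (Pz v w))
      = T (2 * ((ρ w : ℤ) - (ρ u : ℤ))) * invert (evq (Pz u w)) := by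
    intro u
    by_cases hu : u ≤ w
    · have h := hPz.2.2.2 u w hu
      rw [h]
      refine (finsum_mem_univ _).symm.trans
        (finsum_mem_inter_support_eq
          (fun t => evq (Rz u t) * evq (Pz t w)) Set.univ (Set.Icc u w) ?_)
      ext t
      simp only [Set.mem_inter_iff, Set.mem_univ, true_and, Set.mem_Icc,
        Function.mem_support]
      constructor
      · rintro hne
        refine ⟨⟨?_, ?_⟩, hne⟩
        · by_contra hc
          exact hne (by rw [hRz.1 _ _ hc, evq_zero, zero_mul])
        · by_contra hc
          exact hne (by rw [hPz.1 _ _ hc, evq_zero, mul_zero])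
      · rintro ⟨_, hne⟩; exact hne
    · rw [hPz.1 u w hu, evq_zero, map_zero, mul_zero]
      apply finsum_eq_zero_of_forall_eq_zero
      intro v
      by_cases h1 : u ≤ v
      · by_cases h2 : v ≤ w
        · exact absurd (h1.trans h2) hu
        · rw [hPz.1 _ _ h2, evq_zero, mul_zero]
      · rw [hRz.1 _ _ h1, evq_zero, zero_mul]
  -- Step 3: subtract.
  set E : P → Polynomial ℤ := fun v => Q v - Pz v w with hE
  have hsuppP : (Function.support fun v => Pz v w) ⊆ Set.Iic w := by
    intro v hv
    simp only [Function.mem_support] at hv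
    by_contra hc
    exact hv (hPz.1 _ _ hc)
  have hEfin : (Function.support E).Finite := by
    apply (hQfin.union hIicw).subset
    intro v hv
    by_contra hc
    simp only [Set.mem_union, Set.mem_Iic, Function.mem_support, not_or, not_not] at hc
    exact (Function.mem_support.mp hv)
      (by rw [show E v = Q v - Pz v w from rfl, hc.1, hPz.1 _ _ hc.2, sub_zero])
  have starE : ∀ u : P, (∑ᶠ v : P, evq (Rz u v) * evq (E v))
      = T (2 * ((ρ w : ℤ) - (ρ u : ℤ))) * invert (evq (E u)) := by
    intro u
    have hfinQ : (Function.support fun v => evq (Rz u v) * evq (Q v)).Finite := by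
      apply hQfin.subset
      intro v hv
      simp only [Function.mem_support] at hv ⊢
      intro h0
      exact hv (by rw [h0, evq_zero, mul_zero])
    have hfinP : (Function.support fun v => evq (Rz u v) * evq (Pz v w)).Finite := by
      apply hIicw.subset
      intro v hv
      simp only [Function.mem_support] at hv
      by_contra hc
      exact hv (by rw [hPz.1 _ _ hc, evq_zero, mul_zero])
    calc (∑ᶠ v : P, evq (Rz u v) * evq (E v))
        = ∑ᶠ v : P, (evq (Rz u v) * evq (Q v) - evq (Rz u v) * evq (Pz v w)) := by
          apply finsum_congr
          intro v
          rw [show E v = Q v - Pz v w from rfl, evq_sub, mul_sub]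
      _ = (∑ᶠ v : P, evq (Rz u v) * evq (Q v))
            - ∑ᶠ v : P, evq (Rz u v) * evq (Pz v w) := finsum_sub_distrib hfinQ hfinP
      _ = T (2 * ((ρ w : ℤ) - (ρ u : ℤ))) * invert (evq (E u)) := by
          rw [star u, star2 u, show E u = Q u - Pz u w from rfl, evq_sub, map_sub]
          ring
  -- Step 4: conclude by a maximality / degree argument.
  intro v0
  by_contra hv0
  have hv0' : E v0 ≠ 0 := sub_ne_zero.mpr hv0
  obtain ⟨u, hu, hmax⟩ := Set.Finite.exists_maximalFor ρ _ hEfin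
    ⟨v0, Function.mem_support.mpr hv0'⟩
  have hEu : E u ≠ 0 := hu
  have hsingle : (∑ᶠ v : P, evq (Rz u v) * evq (E v)) = evq (Rz u u) * evq (E u) := by
    apply finsum_eq_single
    intro v hvne
    by_cases h1 : u ≤ v
    · have hlt : u < v := lt_of_le_of_ne h1 (Ne.symm hvne)
      have hρlt : ρ u < ρ v := rho_lt_s18 ρ hρcov hP u v hlt
      have hEv : E v = 0 := by
        by_contra hc
        have := hmax (Function.mem_support.mpr hc) (le_of_lt hρlt)
        omega
      rw [hEv, evq_zero, mul_zero]
    · rw [hRz.1 _ _ h1, evq_zero, zero_mul]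
  rw [hRz.2.1 u, evq_one, one_mul] at hsingle
  have heq : evq (E u) = T (2 * ((ρ w : ℤ) - (ρ u : ℤ))) * invert (evq (E u)) :=
    hsingle.symm.trans (starE u)
  have hne : u ≠ w := by
    intro h
    subst h
    exact hEu (by rw [show E u = Q u - Pz u u from rfl, hQw, hPz.2.1]; ring)
  have hdQ := hdeg u hne
  have hdP : DegLtHalf (Pz u w) ((ρ w : ℤ) - (ρ u : ℤ)) := by
    by_cases h : u ≤ w
    · exact hPz.2.2.1 u w (lt_of_le_of_ne h hne)
    · exact Or.inl (hPz.1 u w h)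
  have hdE : 2 * ((E u).natDegree : ℤ) < (ρ w : ℤ) - (ρ u : ℤ) := by
    have hEu' : E u = Q u - Pz u w := rfl
    rcases hdQ with h | h <;> rcases hdP with h' | h'
    · exact absurd (by rw [hEu', h, h', sub_zero]) hEu
    · have hd : (E u).natDegree = (Pz u w).natDegree := by
        rw [hEu', h, zero_sub, Polynomial.natDegree_neg]
      omega
    · have hd : (E u).natDegree = (Q u).natDegree := by rw [hEu', h', sub_zero]
      omega
    · have hEn : (E u).natDegree ≤ max (Q u).natDegree (Pz u w).natDegree :=
        hEu' ▸ Polynomial.natDegree_sub_le (Q u) (Pz u w)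
      rcases max_cases (Q u).natDegree (Pz u w).natDegree with ⟨hc, _⟩ | ⟨hc, _⟩ <;> omega
  exact key_contradiction (E u) hEu _ hdE heq

end
end

section
/- Recursion for Kazhdan–Lusztig–Stanley polynomials of a pircon system: Let {x,z} = {q,−1}, let (R^q_{u,w}) and (R^{−1}_{u,w}) be the two families of Kazhdan–Lusztig R-polynomials of a pircon system (P,S), both satisfying the up-down symmetry, and let (P^z_{u,w}) be the Kazhdan–Lusztig–Stanley polynomials of (R^z_{u,w}). For u, u' ∈ P let μ(u,u') denote the coefficient of q^{(ρ(u,u')−1)/2} in P^z_{u,u'} (interpreted as 0 when ρ(u,u') is even). Let v, w ∈ P with v ≤ w, let M ∈ S with M(w) ⋖ w, and set v' = min{v, M(v)}, v'' = max{v, M(v)}, and x_v = x if M(v) = v and x_v = q otherwise. Then P^z_{v,w} = P^z_{v',M(w)} + x_v·P^z_{v'',M(w)} − Σ_u μ(u,M(w))·q^{ρ(u,w)/2}·P^z_{v,u}, where the sum runs over all u ∈ P with M(u) ≤ u if x = q, and over all u ∈ P with M(u) < u if x = −1. -/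
open Polynomial LaurentPolynomial

noncomputable section

open Classical in
/-- `μ(u,u')`: the coefficient of `q^{(ρ(u,u')-1)/2}` in `P^z_{u,u'}`, interpreted as `0`
when `ρ(u,u')` is even. -/
def muC {P : Type*} [PartialOrder P] (ρ : P → ℕ) (Pz : P → P → Polynomial ℤ)
    (u u' : P) : ℤ :=
  if (ρ u' - ρ u) % 2 = 1 then (Pz u u').coeff ((ρ u' - ρ u - 1) / 2) else 0

namespace KLSaux

abbrev A := LaurentPolynomial ℤ

lemma T_mul_apply (n k : ℤ) (f : A) : ((T n : A) * f).coeff k = f.coeff (k - n) := by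
  have h : (T n : A) = AddMonoidAlgebra.single n 1 := rfl
  rw [h, AddMonoidAlgebra.coeff_single_mul_apply, one_mul, neg_add_eq_sub]

lemma T_apply (n k : ℤ) : (T n : A).coeff k = if k = n then 1 else 0 := by
  have h : (T n : A) = AddMonoidAlgebra.single n 1 := rfl
  rw [h]
  classical
  rw [AddMonoidAlgebra.coeff_single_apply]
  simp [eq_comm]

lemma one_apply' (k : ℤ) : (1 : A).coeff k = if k = 0 then 1 else 0 := by
  rw [← T_zero, T_apply]

lemma intCast_eq_C (c : ℤ) : ((c : ℤ) : A) = LaurentPolynomial.C c := by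
  rw [← map_intCast (LaurentPolynomial.C : ℤ →+* A) c, Int.cast_id]

lemma intCast_mul_apply (c : ℤ) (f : A) (k : ℤ) : ((c : A) * f).coeff k = c * f.coeff k := by
  rw [intCast_eq_C]
  have h : (LaurentPolynomial.C c : A) = AddMonoidAlgebra.single 0 c := rfl
  rw [h, AddMonoidAlgebra.coeff_single_mul_apply, neg_zero, zero_add]

lemma invert_intCast (c : ℤ) : invert ((c : ℤ) : A) = (c : A) := by
  rw [intCast_eq_C, invert_C]

lemma evq_monomial (n : ℕ) (a : ℤ) :
    evq ((Polynomial.monomial n) a) = AddMonoidAlgebra.single (2 * (n : ℤ)) a := by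
  rw [evq, Polynomial.aeval_monomial, T_pow, single_eq_C_mul_T]
  have h1 : (algebraMap ℤ A) a = LaurentPolynomial.C a := by
    exact (LaurentPolynomial.C_eq_algebraMap a).symm
  rw [h1, mul_comm ((n:ℤ)) 2]

lemma evq_apply_even (p : Polynomial ℤ) (m : ℕ) : (evq p).coeff (2 * (m : ℤ)) = p.coeff m := by
  induction p using Polynomial.induction_on' with
  | add p q hp hq => rw [evq, map_add, ← evq, ← evq, AddMonoidAlgebra.coeff_add, Finsupp.add_apply, hp, hq, Polynomial.coeff_add]
  | monomial n a =>
      rw [evq_monomial]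
      classical
      rw [AddMonoidAlgebra.coeff_single_apply, Polynomial.coeff_monomial]
      by_cases h : n = m
      · simp [h]
      · have h2 : ¬ (2 * (n:ℤ) = 2 * (m:ℤ)) := by omega
        simp [h2, h, Ne.symm h]

lemma evq_apply_odd (p : Polynomial ℤ) (k : ℤ) (h : ¬ (2 ∣ k)) : (evq p).coeff k = 0 := by
  induction p using Polynomial.induction_on' with
  | add p q hp hq => rw [evq, map_add, ← evq, ← evq, AddMonoidAlgebra.coeff_add, Finsupp.add_apply, hp, hq, add_zero]
  | monomial n a =>
      rw [evq_monomial]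
      classical
      rw [AddMonoidAlgebra.coeff_single_apply]
      have : ¬ (2 * (n:ℤ) = k) := fun hc => h ⟨n, hc.symm⟩
      simp [this]

lemma evq_apply_neg (p : Polynomial ℤ) (k : ℤ) (h : k < 0) : (evq p).coeff k = 0 := by
  induction p using Polynomial.induction_on' with
  | add p q hp hq => rw [evq, map_add, ← evq, ← evq, AddMonoidAlgebra.coeff_add, Finsupp.add_apply, hp, hq, add_zero]
  | monomial n a =>
      rw [evq_monomial]
      classical
      rw [AddMonoidAlgebra.coeff_single_apply]
      have : ¬ (2 * (n:ℤ) = k) := by omega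
      simp [this]

/-- `DegLtHalf`-style vanishing. -/
lemma evq_apply_zero_of_deg {p : Polynomial ℤ} {d k : ℤ}
    (h : p = 0 ∨ 2 * (p.natDegree : ℤ) < d) (hk : d ≤ k) : (evq p).coeff k = 0 := by
  rcases h with rfl | h
  · rw [evq, map_zero]; rfl
  by_cases h2 : (2 : ℤ) ∣ k
  · obtain ⟨j, hj⟩ := h2
    have hj0 : 0 ≤ j := by omega
    have hm : k = 2 * ((j.toNat : ℤ)) := by omega
    rw [hm, evq_apply_even]
    apply Polynomial.coeff_eq_zero_of_natDegree_lt
    omega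
  · exact evq_apply_odd p k h2

lemma evq_X : evq Polynomial.X = T 2 := by rw [evq, Polynomial.aeval_X]

lemma evq_neg_one : evq (-1) = -1 := by rw [evq, map_neg, map_one]

/-! ### Poset lemmas -/

variable {P : Type*} [PartialOrder P]

lemma exists_covby_le {u v : P} (hf : (Set.Iic v).Finite) (h : u < v) :
    ∃ c, u ⋖ c ∧ c ≤ v := by
  have hs : ({t : P | u < t ∧ t ≤ v}).Finite := hf.subset (fun t ht => ht.2)
  obtain ⟨c, hc, hmin⟩ := Set.Finite.exists_minimalFor id _ hs ⟨v, h, le_refl v⟩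
  refine ⟨c, ⟨hc.1, fun z hz hzc => ?_⟩, hc.2⟩
  have : z ∈ {t : P | u < t ∧ t ≤ v} := ⟨hz, le_trans hzc.le hc.2⟩
  exact absurd (hmin this hzc.le) hzc.not_ge

lemma exists_le_covby {u v : P} (hf : (Set.Iic v).Finite) (h : u < v) :
    ∃ c, u ≤ c ∧ c ⋖ v := by
  have hs : ({t : P | u ≤ t ∧ t < v}).Finite := hf.subset (fun t ht => ht.2.le)
  obtain ⟨c, hc, hmax⟩ := Set.Finite.exists_maximalFor id _ hs ⟨u, le_refl u, h⟩
  refine ⟨c, hc.1, ⟨hc.2, fun z hz hzv => ?_⟩⟩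
  have : z ∈ {t : P | u ≤ t ∧ t < v} := ⟨le_trans hc.1 hz.le, hzv⟩
  exact absurd (hmax this hz.le) hz.not_ge

variable (ρ : P → ℕ)

lemma rho_lt_aux (hρcov : ∀ a b : P, a ⋖ b → ρ b = ρ a + 1) :
    ∀ N : ℕ, ∀ v : P, ∀ hf : (Set.Iic v).Finite, (Set.Iic v).ncard ≤ N →
      ∀ u, u < v → ρ u < ρ v := by
  intro N
  induction N with
  | zero =>
      intro v hf hc u h
      have hv : v ∈ Set.Iic v := le_refl v
      have : (Set.Iic v).ncard = 0 := Nat.le_zero.1 hc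
      rw [Set.ncard_eq_zero hf] at this
      simp [this] at hv
  | succ N IH =>
      intro v hf hc u h
      obtain ⟨c, hc1, hc2⟩ := exists_le_covby hf h
      have hv := hρcov _ _ hc2
      rcases eq_or_lt_of_le hc1 with rfl | hlt
      · omega
      · have hsub : Set.Iic c ⊂ Set.Iic v := by
          constructor
          · exact fun t ht => le_trans ht hc2.lt.le
          · intro hcon
            have hvc : v ≤ c := hcon (Set.mem_Iic.2 (le_refl v))
            exact hc2.lt.not_ge hvc
        have hlt2 := Set.ncard_lt_ncard hsub hf
        have := IH c (hf.subset hsub.1) (by omega) u hlt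
        omega

lemma rho_mono (hρcov : ∀ a b : P, a ⋖ b → ρ b = ρ a + 1) {u v : P}
    (h : u < v) (hf : (Set.Iic v).Finite) : ρ u < ρ v :=
  rho_lt_aux ρ hρcov (Set.Iic v).ncard v hf (le_refl _) u h

lemma lifting (hρcov : ∀ a b : P, a ⋖ b → ρ b = ρ a + 1) (M : P → P)
    (hspm : ∀ t u : P, t ⋖ u → M t ≠ u → M t < M u)
    {w : P} (hf : (Set.Iic w).Finite) (hw : M w ⋖ w) :
    ∀ p, p ≤ w → M p ≤ w := by
  suffices H : ∀ n : ℕ, ∀ p, p ≤ w → ρ w ≤ ρ p + n → M p ≤ w by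
    intro p hp
    exact H (ρ w) p hp (by omega)
  intro n
  induction n with
  | zero =>
      intro p hp hn
      rcases eq_or_lt_of_le hp with rfl | hlt
      · exact hw.le
      · exact absurd (rho_mono ρ hρcov hlt hf) (by omega)
  | succ n IH =>
      intro p hp hn
      rcases eq_or_lt_of_le hp with rfl | hlt
      · exact hw.le
      obtain ⟨c, hc1, hc2⟩ := exists_covby_le hf hlt
      have hcw := hρcov _ _ hc1
      have hMc : M c ≤ w := IH c hc2 (by omega)
      by_cases hMp : M p = c
      · rw [hMp]; exact hc2
      · exact le_trans (hspm p c hc1 hMp).le hMc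




lemma evq_add (p q : Polynomial ℤ) : evq (p + q) = evq p + evq q := by simp [evq]
lemma evq_mul (p q : Polynomial ℤ) : evq (p * q) = evq p * evq q := by simp [evq]
lemma evq_one : evq 1 = 1 := by simp [evq]
lemma evq_zero : evq 0 = 0 := by simp [evq]

variable {P : Type*} [PartialOrder P]

structure Ctx (P : Type*) [PartialOrder P] where
  ρ : P → ℕ
  x : Polynomial ℤ
  z : Polynomial ℤ
  Rz : P → P → Polynomial ℤ
  Pz : P → P → Polynomial ℤ
  M : P → P
  U : Set P
  w : P
  hρcov : ∀ a b : P, a ⋖ b → ρ b = ρ a + 1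
  hxz : (x = Polynomial.X ∧ z = -1) ∨ (x = -1 ∧ z = Polynomial.X)
  hRz0 : ∀ u v : P, ¬ u ≤ v → Rz u v = 0
  hRz1 : ∀ v : P, Rz v v = 1
  hrec : ∀ u v : P, M v ⋖ v →
    (M u ⋖ u → Rz u v = Rz (M u) (M v)) ∧
    (u ⋖ M u → Rz u v = (Polynomial.X - 1) * Rz u (M v) + Polynomial.X * Rz (M u) (M v)) ∧
    (M u = u → Rz u v = (Polynomial.X - 1 - z) * Rz u (M v))
  hud : ∀ u v : P, u ⋖ M u →
    (v ⋖ M v → Rz u v = Rz (M u) (M v)) ∧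
    (M v ⋖ v → Rz u v = (Polynomial.X - 1) * Rz (M u) v + Polynomial.X * Rz (M u) (M v)) ∧
    (M v = v → Rz u v = (Polynomial.X - 1 - z) * Rz (M u) v)
  hPz0 : ∀ u v : P, ¬ u ≤ v → Pz u v = 0
  hPz1 : ∀ v : P, Pz v v = 1
  hPdeg : ∀ u v : P, u < v → DegLtHalf (Pz u v) ((ρ v : ℤ) - (ρ u : ℤ))
  hPfe : ∀ u v : P, u ≤ v →
    T (2 * ((ρ v : ℤ) - (ρ u : ℤ))) * invert (evq (Pz u v)) =
      ∑ᶠ t ∈ Set.Icc u v, evq (Rz u t) * evq (Pz t v)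
  hinv : ∀ t, M (M t) = t
  htri : ∀ t : P, M t ⋖ t ∨ M t = t ∨ t ⋖ M t
  hspm : ∀ t u : P, t ⋖ u → M t ≠ u → M t < M u
  hMw : M w ⋖ w
  hFin : (Set.Iic w).Finite
  hU : (x = Polynomial.X ∧ U = {u : P | M u ≤ u}) ∨ (x = -1 ∧ U = {u : P | M u < u})

namespace Ctx

variable (c : Ctx P)

open Polynomial LaurentPolynomial

/-- `γ` coefficient polynomial. -/
noncomputable def gam (t : P) : Polynomial ℤ :=
  open Classical in if c.M t = t then 1 + c.x else if c.M t ≤ t then X else 1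

/-- `δ` coefficient polynomial. -/
noncomputable def del (t : P) : Polynomial ℤ :=
  open Classical in if c.M t = t then 0 else if c.M t ≤ t then 1 else X

/-- combined coefficient polynomial. -/
noncomputable def cp (a t : P) : Polynomial ℤ :=
  open Classical in if c.M a = a then (1 + c.x) * c.Rz a t
  else if c.M a ≤ a then c.Rz a t + c.Rz (c.M a) t
  else X * (c.Rz a t + c.Rz (c.M a) t)

/-- The `A`-coefficient vector of `C^x_M C'_{M w}`. -/
noncomputable def Ahat (t : P) : A :=
  evq (c.Pz (open Classical in if c.M t ≤ t then c.M t else t) (c.M c.w)) +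
    evq (open Classical in if c.M t = t then c.x else X) *
      evq (c.Pz (open Classical in if c.M t ≤ t then t else c.M t) (c.M c.w))

/-- The `μ`-correction vector. -/
noncomputable def Bhat (t : P) : A :=
  ∑ᶠ u ∈ c.U, ((muC c.ρ c.Pz u (c.M c.w) : ℤ) : LaurentPolynomial ℤ) *
    (T ((c.ρ c.w : ℤ) - (c.ρ u : ℤ)) * evq (c.Pz t u))

noncomputable def Qhat (t : P) : A := c.Ahat t - c.Bhat t

/-! #### basic facts -/

lemma mw_lt : c.M c.w < c.w := c.hMw.lt

lemma Minj {a b : P} (h : c.M a = c.M b) : a = b := by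
  have := congrArg c.M h
  rwa [c.hinv, c.hinv] at this

lemma finIic {u : P} (h : u ≤ c.w) : (Set.Iic u).Finite :=
  c.hFin.subset (fun t ht => le_trans ht h)

lemma rho_w : c.ρ c.w = c.ρ (c.M c.w) + 1 := c.hρcov _ _ c.hMw

lemma rho_lt {u v : P} (h : u < v) (hv : v ≤ c.w) : c.ρ u < c.ρ v :=
  rho_mono c.ρ c.hρcov h (c.finIic hv)

lemma rho_le {u v : P} (h : u ≤ v) (hv : v ≤ c.w) : c.ρ u ≤ c.ρ v := by
  rcases eq_or_lt_of_le h with rfl | h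
  · exact le_refl _
  · exact (c.rho_lt h hv).le

lemma lift {p : P} (h : p ≤ c.w) : c.M p ≤ c.w :=
  lifting c.ρ c.hρcov c.M c.hspm c.hFin c.hMw p h

lemma hx1 : X - 1 - c.z = c.x := by
  rcases c.hxz with ⟨hx, hz⟩ | ⟨hx, hz⟩ <;> rw [hx, hz] <;> ring

lemma evq_Pz_ne {a b : P} (h : evq (c.Pz a b) ≠ 0) : a ≤ b := by
  by_contra hc
  rw [c.hPz0 a b hc, evq_zero] at h
  exact h rfl

lemma evq_Rz_ne {a b : P} (h : evq (c.Rz a b) ≠ 0) : a ≤ b := by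
  by_contra hc
  rw [c.hRz0 a b hc, evq_zero] at h
  exact h rfl

lemma muC_ne {u : P} (h : (muC c.ρ c.Pz u (c.M c.w) : ℤ) ≠ 0) : u ≤ c.M c.w := by
  by_contra hc
  apply h
  rw [muC, c.hPz0 u (c.M c.w) hc]
  simp

/-! #### trichotomy if-reductions -/

section TriSimp

variable {t : P}

lemma gam_fix (h : c.M t = t) : c.gam t = 1 + c.x := by rw [gam, if_pos h]
lemma gam_down (h : c.M t ⋖ t) : c.gam t = X := by rw [gam, if_neg h.ne, if_pos h.le]
lemma gam_up (h : t ⋖ c.M t) : c.gam t = 1 := by rw [gam, if_neg h.ne', if_neg h.lt.not_ge]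
lemma del_fix (h : c.M t = t) : c.del t = 0 := by rw [del, if_pos h]
lemma delM_fix (h : c.M t = t) : c.del (c.M t) = 0 := by rw [h, c.del_fix h]
lemma delM_down (h : c.M t ⋖ t) : c.del (c.M t) = X := by
  rw [del, c.hinv t, if_neg (Ne.symm h.ne), if_neg h.lt.not_ge]
lemma delM_up (h : t ⋖ c.M t) : c.del (c.M t) = 1 := by
  rw [del, c.hinv t, if_neg h.ne, if_pos h.le]

end TriSimp

lemma X_sub_one_ne : (X : Polynomial ℤ) - 1 ≠ 0 := by
  intro h
  have h1 := congrArg (fun p : Polynomial ℤ => p.coeff 1) h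
  simp [Polynomial.coeff_sub, Polynomial.coeff_one] at h1

/-- The key nine-case `R`-polynomial identity. -/
lemma RKEY (a t : P) :
    c.gam t * c.Rz a t + c.del (c.M t) * c.Rz a (c.M t) = c.cp a t := by
  have hrecMt : ∀ u : P, t ⋖ c.M t →
      (c.M u ⋖ u → c.Rz u (c.M t) = c.Rz (c.M u) t) ∧
      (u ⋖ c.M u → c.Rz u (c.M t) = (X - 1) * c.Rz u t + X * c.Rz (c.M u) t) ∧
      (c.M u = u → c.Rz u (c.M t) = (X - 1 - c.z) * c.Rz u t) := by
    intro u ht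
    have h := c.hrec u (c.M t) (by rw [c.hinv]; exact ht)
    rwa [c.hinv] at h
  rcases c.htri a with ha | ha | ha <;> rcases c.htri t with ht | ht | ht
  -- a down
  · -- t down
    rw [c.gam_down ht, c.delM_down ht, cp, if_neg ha.ne, if_pos ha.le]
    have fA := (c.hrec a t ht).1 ha
    have fB := (c.hrec (c.M a) t ht).2.1 (by rw [c.hinv]; exact ha)
    rw [c.hinv] at fB
    rw [fA, fB]; ring
  · -- t fix
    rw [c.gam_fix ht, c.delM_fix ht, cp, if_neg ha.ne, if_pos ha.le]
    have fB := (c.hud (c.M a) t (by rw [c.hinv]; exact ha)).2.2 ht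
    rw [c.hinv] at fB
    rw [fB, c.hx1]
    rcases c.hxz with ⟨hx, _⟩ | ⟨hx, _⟩ <;> rw [hx] <;> ring
  · -- t up
    rw [c.gam_up ht, c.delM_up ht, cp, if_neg ha.ne, if_pos ha.le]
    have fB := (hrecMt a ht).1 ha
    rw [fB]; ring
  -- a fix
  · -- t down
    rw [c.gam_down ht, c.delM_down ht, cp, if_pos ha]
    have fA := (c.hrec a t ht).2.2 ha
    rw [fA, c.hx1]
    rcases c.hxz with ⟨hx, hz⟩ | ⟨hx, hz⟩ <;> rw [hx] <;> ring
  · -- t fix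
    rw [c.gam_fix ht, c.delM_fix ht, cp, if_pos ha]; ring
  · -- t up
    rw [c.gam_up ht, c.delM_up ht, cp, if_pos ha]
    have fB := (hrecMt a ht).2.2 ha
    rw [fB, c.hx1]
    rcases c.hxz with ⟨hx, hz⟩ | ⟨hx, hz⟩ <;> rw [hx] <;> ring
  -- a up
  · -- t down
    rw [c.gam_down ht, c.delM_down ht, cp, if_neg (Ne.symm ha.ne), if_neg ha.lt.not_ge]
    have fA := (c.hrec a t ht).2.1 ha
    have fB := (c.hud a t ha).2.1 ht
    have h8 : (X - 1) * c.Rz a (c.M t) = (X - 1) * c.Rz (c.M a) t := by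
      linear_combination fB - fA
    have h9 : c.Rz a (c.M t) = c.Rz (c.M a) t := mul_left_cancel₀ X_sub_one_ne h8
    rw [h9]; ring
  · -- t fix
    rw [c.gam_fix ht, c.delM_fix ht, cp, if_neg (Ne.symm ha.ne), if_neg ha.lt.not_ge]
    have fA := (c.hud a t ha).2.2 ht
    rw [fA, c.hx1]
    rcases c.hxz with ⟨hx, hz⟩ | ⟨hx, hz⟩ <;> rw [hx] <;> ring
  · -- t up
    rw [c.gam_up ht, c.delM_up ht, cp, if_neg (Ne.symm ha.ne), if_neg ha.lt.not_ge]
    have fB := (hrecMt a ht).2.1 ha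
    rw [fB]; ring

end Ctx


namespace Ctx

open Polynomial LaurentPolynomial

variable {P : Type*} [PartialOrder P] (c : Ctx P)

lemma del_down {t : P} (h : c.M t ⋖ t) : c.del t = 1 := by
  rw [del, if_neg h.ne, if_pos h.le]

lemma del_up {t : P} (h : t ⋖ c.M t) : c.del t = X := by
  rw [del, if_neg h.ne', if_neg h.lt.not_ge]

lemma mw_le_w : c.M c.w ≤ c.w := c.hMw.le

/-- Extended functional equation. -/
lemma FE (a u : P) (hu : u ≤ c.w) :
    (∑ᶠ t : P, evq (c.Rz a t) * evq (c.Pz t u)) =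
      T (2 * ((c.ρ u : ℤ) - (c.ρ a : ℤ))) * invert (evq (c.Pz a u)) := by
  classical
  by_cases hau : a ≤ u
  · have hIcc : (Set.Icc a u).Finite := (c.finIic hu).subset (fun t ht => ht.2)
    have hsub : Function.support (fun t => evq (c.Rz a t) * evq (c.Pz t u)) ⊆
        ↑hIcc.toFinset := by
      intro t ht
      simp only [Function.mem_support] at ht
      rw [Finset.mem_coe, Set.Finite.mem_toFinset]
      exact ⟨c.evq_Rz_ne (left_ne_zero_of_mul ht), c.evq_Pz_ne (right_ne_zero_of_mul ht)⟩
    rw [c.hPfe a u hau, finsum_mem_eq_finite_toFinset_sum _ hIcc,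
      finsum_eq_finset_sum_of_support_subset _ hsub]
  · have h0 : ∀ t : P, evq (c.Rz a t) * evq (c.Pz t u) = 0 := by
      intro t
      by_cases hat : a ≤ t
      · have : ¬ t ≤ u := fun h => hau (le_trans hat h)
        rw [c.hPz0 t u this, evq_zero, mul_zero]
      · rw [c.hRz0 a t hat, evq_zero, zero_mul]
    rw [finsum_eq_zero_of_forall_eq_zero h0, c.hPz0 a u hau, evq_zero, map_zero, mul_zero]

lemma Ahat_ne {t : P} (h : c.Ahat t ≠ 0) : t ≤ c.M c.w ∨ c.M t ≤ c.M c.w := by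
  classical
  by_contra hc
  push_neg at hc
  apply h
  have h1 : ¬ (if c.M t ≤ t then c.M t else t) ≤ c.M c.w := by
    split_ifs with hh
    · exact hc.2
    · exact hc.1
  have h2 : ¬ (if c.M t ≤ t then t else c.M t) ≤ c.M c.w := by
    split_ifs with hh
    · exact hc.1
    · exact hc.2
  rw [Ahat, c.hPz0 _ _ h1, c.hPz0 _ _ h2, evq_zero]
  simp

lemma muC_zero' {u : P} (h : muC c.ρ c.Pz u (c.M c.w) = 0) :
    ((muC c.ρ c.Pz u (c.M c.w) : ℤ) : LaurentPolynomial ℤ) = 0 := by rw [h]; simp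

lemma Bhat_eq_sum (t : P) :
    c.Bhat t = ∑ u ∈ c.hFin.toFinset,
      Set.indicator c.U (fun u => ((muC c.ρ c.Pz u (c.M c.w) : ℤ) : LaurentPolynomial ℤ)) u *
        (T ((c.ρ c.w : ℤ) - (c.ρ u : ℤ)) * evq (c.Pz t u)) := by
  classical
  rw [Bhat, finsum_mem_def]
  have hpt : ∀ u : P,
      Set.indicator c.U (fun u => ((muC c.ρ c.Pz u (c.M c.w) : ℤ) : LaurentPolynomial ℤ) *
        (T ((c.ρ c.w : ℤ) - (c.ρ u : ℤ)) * evq (c.Pz t u))) u =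
      Set.indicator c.U (fun u => ((muC c.ρ c.Pz u (c.M c.w) : ℤ) : LaurentPolynomial ℤ)) u *
        (T ((c.ρ c.w : ℤ) - (c.ρ u : ℤ)) * evq (c.Pz t u)) := by
    intro u
    rw [Set.indicator_apply, Set.indicator_apply]
    split_ifs with hu
    · rfl
    · rw [zero_mul]
  rw [finsum_congr hpt]
  apply finsum_eq_finset_sum_of_support_subset
  intro u hu
  have hl := left_ne_zero_of_mul hu
  rw [Finset.mem_coe, Set.Finite.mem_toFinset]
  by_cases hU' : u ∈ c.U
  · rw [Set.indicator_of_mem hU'] at hl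
    have hμ : muC c.ρ c.Pz u (c.M c.w) ≠ 0 := by
      intro h0
      exact hl (c.muC_zero' h0)
    exact le_trans (c.muC_ne hμ) c.mw_le_w
  · rw [Set.indicator_of_notMem hU'] at hl
    exact absurd rfl hl

lemma Bhat_ne {t : P} (h : c.Bhat t ≠ 0) : t ≤ c.M c.w := by
  classical
  by_contra hc
  apply h
  rw [Bhat_eq_sum]
  apply Finset.sum_eq_zero
  intro u _
  by_cases hU' : u ∈ c.U
  · rw [Set.indicator_of_mem hU']
    by_cases hμ : muC c.ρ c.Pz u (c.M c.w) = 0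
    · rw [c.muC_zero' hμ, zero_mul]
    · have hut : ¬ t ≤ u := fun hh => hc (le_trans hh (c.muC_ne hμ))
      rw [c.hPz0 t u hut, evq_zero, mul_zero, mul_zero]
  · rw [Set.indicator_of_notMem hU', zero_mul]

lemma hFm : (Set.Iic (c.M c.w)).Finite := c.finIic c.hMw.le

lemma hInvol : Function.Involutive c.M := fun t => c.hinv t

lemma hFmM : (c.M ⁻¹' (Set.Iic (c.M c.w))).Finite :=
  Set.Finite.preimage (Set.injOn_of_injective c.hInvol.injective) c.hFm

lemma hAsupp (a : P) : (Function.support fun t => evq (c.Rz a t) * c.Ahat t).Finite := by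
  apply (c.hFm.union c.hFmM).subset
  intro t ht
  rcases c.Ahat_ne (right_ne_zero_of_mul ht) with h | h
  · exact Or.inl h
  · exact Or.inr h

lemma hBsupp (a : P) : (Function.support fun t => evq (c.Rz a t) * c.Bhat t).Finite := by
  apply c.hFm.subset
  intro t ht
  exact c.Bhat_ne (right_ne_zero_of_mul ht)

lemma T2_key : (T 2 : LaurentPolynomial ℤ) * (1 + invert (evq c.x)) = 1 + evq c.x := by
  rcases c.hxz with ⟨hx, _⟩ | ⟨hx, _⟩ <;> rw [hx]
  · rw [evq_X, invert_T, mul_add, mul_one, ← T_add]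
    norm_num [T_zero]
    ring
  · rw [evq_neg_one, map_neg, map_one]
    ring

lemma STAR_A (a : P) :
    (∑ᶠ t : P, evq (c.Rz a t) * c.Ahat t) =
      T (2 * ((c.ρ c.w : ℤ) - (c.ρ a : ℤ))) * invert (c.Ahat a) := by
  classical
  have hpt : ∀ t : P, evq (c.Rz a t) * c.Ahat t =
      evq (c.gam t * c.Rz a t) * evq (c.Pz t (c.M c.w)) +
        evq (c.del t * c.Rz a t) * evq (c.Pz (c.M t) (c.M c.w)) := by
    intro t
    rcases c.htri t with ht | ht | ht
    · rw [Ahat, if_pos ht.le, if_neg ht.ne, if_pos ht.le, c.gam_down ht, c.del_down ht,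
        evq_mul, evq_mul, evq_X, evq_one]
      ring
    · have h1 : (if c.M t ≤ t then c.M t else t) = t := by rw [ht]; simp
      have h2 : (if c.M t ≤ t then t else c.M t) = t := by rw [ht]; simp
      rw [Ahat, h1, h2, if_pos ht, c.gam_fix ht, c.del_fix ht, ht,
        evq_mul, evq_mul, evq_add, evq_zero, evq_one]
      ring
    · have h1 : ¬ c.M t ≤ t := ht.lt.not_ge
      rw [Ahat, if_neg h1, if_neg ht.ne', if_neg h1, c.gam_up ht, c.del_up ht,
        evq_mul, evq_mul, evq_one, evq_X]
      ring
  rw [finsum_congr hpt]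
  have hs1 : (Function.support fun t =>
      evq (c.gam t * c.Rz a t) * evq (c.Pz t (c.M c.w))).Finite := by
    apply c.hFm.subset
    intro t ht
    exact c.evq_Pz_ne (right_ne_zero_of_mul ht)
  have hs2 : (Function.support fun t =>
      evq (c.del t * c.Rz a t) * evq (c.Pz (c.M t) (c.M c.w))).Finite := by
    apply c.hFmM.subset
    intro t ht
    exact Set.mem_preimage.2 (Set.mem_Iic.2 (c.evq_Pz_ne (right_ne_zero_of_mul ht)))
  rw [finsum_add_distrib hs1 hs2]
  have hre : (∑ᶠ t : P, evq (c.del t * c.Rz a t) * evq (c.Pz (c.M t) (c.M c.w))) =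
      ∑ᶠ t : P, evq (c.del (c.M t) * c.Rz a (c.M t)) * evq (c.Pz t (c.M c.w)) := by
    have hcongr : ∀ t : P, evq (c.del t * c.Rz a t) * evq (c.Pz (c.M t) (c.M c.w)) =
        (fun s => evq (c.del (c.M s) * c.Rz a (c.M s)) * evq (c.Pz s (c.M c.w)))
          ((Function.Involutive.toPerm c.M c.hInvol) t) := by
      intro t
      simp only [Function.Involutive.coe_toPerm, c.hinv]
    rw [finsum_congr hcongr]
    exact finsum_comp_equiv (Function.Involutive.toPerm c.M c.hInvol)
      (f := fun s => evq (c.del (c.M s) * c.Rz a (c.M s)) * evq (c.Pz s (c.M c.w)))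
  rw [hre]
  have hs2' : (Function.support fun t =>
      evq (c.del (c.M t) * c.Rz a (c.M t)) * evq (c.Pz t (c.M c.w))).Finite := by
    apply c.hFm.subset
    intro t ht
    exact c.evq_Pz_ne (right_ne_zero_of_mul ht)
  rw [← finsum_add_distrib hs1 hs2']
  have hpt2 : ∀ t : P, (evq (c.gam t * c.Rz a t) * evq (c.Pz t (c.M c.w)) +
      evq (c.del (c.M t) * c.Rz a (c.M t)) * evq (c.Pz t (c.M c.w))) =
      evq (c.cp a t) * evq (c.Pz t (c.M c.w)) := by
    intro t
    rw [← add_mul, ← evq_add, c.RKEY a t]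
  rw [finsum_congr hpt2]
  have hrw : c.ρ c.w = c.ρ (c.M c.w) + 1 := c.rho_w
  have hsA : (Function.support fun t => evq (c.Rz a t) * evq (c.Pz t (c.M c.w))).Finite := by
    apply c.hFm.subset
    intro t ht
    exact c.evq_Pz_ne (right_ne_zero_of_mul ht)
  have hsB : (Function.support fun t => evq (c.Rz (c.M a) t) * evq (c.Pz t (c.M c.w))).Finite := by
    apply c.hFm.subset
    intro t ht
    exact c.evq_Pz_ne (right_ne_zero_of_mul ht)
  rcases c.htri a with ha | ha | ha
  · -- M a ⋖ a
    have hra : c.ρ a = c.ρ (c.M a) + 1 := c.hρcov _ _ ha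
    have hsplit : (∑ᶠ t : P, evq (c.cp a t) * evq (c.Pz t (c.M c.w))) =
        (∑ᶠ t : P, evq (c.Rz a t) * evq (c.Pz t (c.M c.w))) +
          ∑ᶠ t : P, evq (c.Rz (c.M a) t) * evq (c.Pz t (c.M c.w)) := by
      rw [← finsum_add_distrib hsA hsB]
      apply finsum_congr
      intro t
      rw [cp, if_neg ha.ne, if_pos ha.le, evq_add, add_mul]
    rw [hsplit, c.FE a (c.M c.w) c.mw_le_w, c.FE (c.M a) (c.M c.w) c.mw_le_w]
    rw [Ahat, if_pos ha.le, if_neg ha.ne, if_pos ha.le, evq_X, map_add, map_mul, invert_T]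
    have e1 : 2 * ((c.ρ (c.M c.w) : ℤ) - (c.ρ (c.M a) : ℤ)) =
        2 * ((c.ρ c.w : ℤ) - (c.ρ a : ℤ)) := by rw [hrw, hra]; push_cast; ring
    have e2 : 2 * ((c.ρ (c.M c.w) : ℤ) - (c.ρ a : ℤ)) =
        2 * ((c.ρ c.w : ℤ) - (c.ρ a : ℤ)) + (-2) := by rw [hrw]; push_cast; ring
    rw [e1, e2, T_add]
    ring
  · -- M a = a
    have hsplit : (∑ᶠ t : P, evq (c.cp a t) * evq (c.Pz t (c.M c.w))) =
        evq (1 + c.x) * ∑ᶠ t : P, evq (c.Rz a t) * evq (c.Pz t (c.M c.w)) := by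
      rw [mul_finsum' _ _ hsA]
      apply finsum_congr
      intro t
      rw [cp, if_pos ha, evq_mul]
      ring
    rw [hsplit, c.FE a (c.M c.w) c.mw_le_w]
    have h1 : (if c.M a ≤ a then c.M a else a) = a := by rw [ha]; simp
    have h2 : (if c.M a ≤ a then a else c.M a) = a := by rw [ha]; simp
    rw [Ahat, h1, h2, if_pos ha, map_add, map_mul]
    have e3 : 2 * ((c.ρ c.w : ℤ) - (c.ρ a : ℤ)) =
        2 + 2 * ((c.ρ (c.M c.w) : ℤ) - (c.ρ a : ℤ)) := by rw [hrw]; push_cast; ring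
    have hxkey := c.T2_key
    rw [e3, T_add, evq_add, evq_one]
    calc (1 + evq c.x) * (T (2 * ((c.ρ (c.M c.w) : ℤ) - (c.ρ a : ℤ))) * invert (evq (c.Pz a (c.M c.w))))
        = (T 2 * (1 + invert (evq c.x))) *
            (T (2 * ((c.ρ (c.M c.w) : ℤ) - (c.ρ a : ℤ))) * invert (evq (c.Pz a (c.M c.w)))) := by
          rw [hxkey]
      _ = T 2 * T (2 * ((c.ρ (c.M c.w) : ℤ) - (c.ρ a : ℤ))) *
            (invert (evq (c.Pz a (c.M c.w))) + invert (evq c.x) * invert (evq (c.Pz a (c.M c.w)))) := by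
          ring
  · -- a ⋖ M a
    have hra : c.ρ (c.M a) = c.ρ a + 1 := c.hρcov _ _ ha
    have hfg : (Function.support fun t => evq (c.Rz a t) * evq (c.Pz t (c.M c.w)) +
        evq (c.Rz (c.M a) t) * evq (c.Pz t (c.M c.w))).Finite :=
      (hsA.union hsB).subset (Function.support_add _ _)
    have hsplit : (∑ᶠ t : P, evq (c.cp a t) * evq (c.Pz t (c.M c.w))) =
        T 2 * ((∑ᶠ t : P, evq (c.Rz a t) * evq (c.Pz t (c.M c.w))) +
          ∑ᶠ t : P, evq (c.Rz (c.M a) t) * evq (c.Pz t (c.M c.w))) := by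
      rw [← finsum_add_distrib hsA hsB, mul_finsum' _ _ hfg]
      apply finsum_congr
      intro t
      rw [cp, if_neg (Ne.symm ha.ne), if_neg ha.lt.not_ge, evq_mul, evq_add]
      rw [show evq (X : Polynomial ℤ) = (T 2 : LaurentPolynomial ℤ) from evq_X]
      ring
    have h1 : ¬ c.M a ≤ a := ha.lt.not_ge
    rw [hsplit, c.FE a (c.M c.w) c.mw_le_w, c.FE (c.M a) (c.M c.w) c.mw_le_w,
      Ahat, if_neg h1, if_neg ha.ne', if_neg h1, evq_X, map_add, map_mul, invert_T]
    have e4 : 2 * ((c.ρ c.w : ℤ) - (c.ρ a : ℤ)) =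
        2 + 2 * ((c.ρ (c.M c.w) : ℤ) - (c.ρ a : ℤ)) := by rw [hrw]; push_cast; ring
    have e7 : 2 * ((c.ρ (c.M c.w) : ℤ) - (c.ρ (c.M a) : ℤ)) =
        2 * ((c.ρ (c.M c.w) : ℤ) - (c.ρ a : ℤ)) + (-2) := by rw [hra]; push_cast; ring
    rw [e4, e7, T_add, T_add]
    ring

lemma STAR_B (a : P) :
    (∑ᶠ t : P, evq (c.Rz a t) * c.Bhat t) =
      T (2 * ((c.ρ c.w : ℤ) - (c.ρ a : ℤ))) * invert (c.Bhat a) := by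
  classical
  have hterm : ∀ u ∈ c.hFin.toFinset,
      (∑ᶠ t : P, evq (c.Rz a t) *
        (Set.indicator c.U (fun u => ((muC c.ρ c.Pz u (c.M c.w) : ℤ) : LaurentPolynomial ℤ)) u *
          (T ((c.ρ c.w : ℤ) - (c.ρ u : ℤ)) * evq (c.Pz t u)))) =
      Set.indicator c.U (fun u => ((muC c.ρ c.Pz u (c.M c.w) : ℤ) : LaurentPolynomial ℤ)) u *
        (T ((c.ρ c.w : ℤ) - (c.ρ u : ℤ)) *
          (T (2 * ((c.ρ u : ℤ) - (c.ρ a : ℤ))) * invert (evq (c.Pz a u)))) := by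
    intro u hu
    have huw : u ≤ c.w := (Set.Finite.mem_toFinset c.hFin).1 hu
    have hsu : (Function.support fun t => evq (c.Rz a t) * evq (c.Pz t u)).Finite := by
      apply (c.finIic huw).subset
      intro t ht
      exact c.evq_Pz_ne (right_ne_zero_of_mul ht)
    have hc1 : ∀ t : P, evq (c.Rz a t) *
        (Set.indicator c.U (fun u => ((muC c.ρ c.Pz u (c.M c.w) : ℤ) : LaurentPolynomial ℤ)) u *
          (T ((c.ρ c.w : ℤ) - (c.ρ u : ℤ)) * evq (c.Pz t u))) =
        (Set.indicator c.U (fun u => ((muC c.ρ c.Pz u (c.M c.w) : ℤ) : LaurentPolynomial ℤ)) u *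
          T ((c.ρ c.w : ℤ) - (c.ρ u : ℤ))) * (evq (c.Rz a t) * evq (c.Pz t u)) := by
      intro t
      ring
    rw [finsum_congr hc1, ← mul_finsum' _ _ hsu, c.FE a u huw]
    ring
  have hBs : ∀ t : P, evq (c.Rz a t) * c.Bhat t =
      ∑ u ∈ c.hFin.toFinset, evq (c.Rz a t) *
        (Set.indicator c.U (fun u => ((muC c.ρ c.Pz u (c.M c.w) : ℤ) : LaurentPolynomial ℤ)) u *
          (T ((c.ρ c.w : ℤ) - (c.ρ u : ℤ)) * evq (c.Pz t u))) := by
    intro t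
    rw [c.Bhat_eq_sum t, Finset.mul_sum]
  rw [finsum_congr hBs]
  rw [finsum_sum_comm _ _ ?hfin]
  case hfin =>
    intro u hu
    have huw : u ≤ c.w := (Set.Finite.mem_toFinset c.hFin).1 hu
    apply (c.finIic huw).subset
    intro t ht
    simp only [Function.mem_support] at ht
    by_contra htu
    apply ht
    rw [c.hPz0 t u htu, evq_zero, mul_zero, mul_zero, mul_zero]
  rw [Finset.sum_congr rfl hterm]
  -- now the right-hand side
  rw [c.Bhat_eq_sum a, map_sum, Finset.mul_sum]
  apply Finset.sum_congr rfl
  intro u _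
  rw [map_mul, map_mul, invert_T]
  have hind : invert (Set.indicator c.U
      (fun u => ((muC c.ρ c.Pz u (c.M c.w) : ℤ) : LaurentPolynomial ℤ)) u) =
      Set.indicator c.U (fun u => ((muC c.ρ c.Pz u (c.M c.w) : ℤ) : LaurentPolynomial ℤ)) u := by
    by_cases h : u ∈ c.U
    · rw [Set.indicator_of_mem h]
      exact invert_intCast (muC c.ρ c.Pz u (c.M c.w))
    · rw [Set.indicator_of_notMem h]
      exact map_zero _
  rw [hind]
  have eT : (T ((c.ρ c.w : ℤ) - (c.ρ u : ℤ)) : LaurentPolynomial ℤ) *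
        T (2 * ((c.ρ u : ℤ) - (c.ρ a : ℤ))) =
      (T (2 * ((c.ρ c.w : ℤ) - (c.ρ a : ℤ))) : LaurentPolynomial ℤ) *
        T (-((c.ρ c.w : ℤ) - (c.ρ u : ℤ))) := by
    rw [← T_add, ← T_add]
    congr 1
    ring
  calc Set.indicator c.U (fun u => ((muC c.ρ c.Pz u (c.M c.w) : ℤ) : LaurentPolynomial ℤ)) u *
        (T ((c.ρ c.w : ℤ) - (c.ρ u : ℤ)) * (T (2 * ((c.ρ u : ℤ) - (c.ρ a : ℤ))) *
          invert (evq (c.Pz a u))))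
      = Set.indicator c.U (fun u => ((muC c.ρ c.Pz u (c.M c.w) : ℤ) : LaurentPolynomial ℤ)) u *
        ((T ((c.ρ c.w : ℤ) - (c.ρ u : ℤ)) * T (2 * ((c.ρ u : ℤ) - (c.ρ a : ℤ)))) *
          invert (evq (c.Pz a u))) := by ring
    _ = _ := by rw [eT]; ring

lemma STAR (a : P) :
    (∑ᶠ t : P, evq (c.Rz a t) * c.Qhat t) =
      T (2 * ((c.ρ c.w : ℤ) - (c.ρ a : ℤ))) * invert (c.Qhat a) := by
  have hpt : ∀ t : P, evq (c.Rz a t) * c.Qhat t =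
      evq (c.Rz a t) * c.Ahat t - evq (c.Rz a t) * c.Bhat t := by
    intro t
    rw [Qhat, mul_sub]
  rw [finsum_congr hpt, finsum_sub_distrib (c.hAsupp a) (c.hBsupp a),
    c.STAR_A a, c.STAR_B a, Qhat, map_sub]
  ring

end Ctx


namespace Ctx

open Polynomial LaurentPolynomial

variable {P : Type*} [PartialOrder P] (c : Ctx P)

lemma X_ne_neg_one : (X : Polynomial ℤ) ≠ -1 := by
  intro h
  have h1 := congrArg (fun p : Polynomial ℤ => p.coeff 1) h
  simp [Polynomial.coeff_one] at h1

lemma U_of_x_X (hx : c.x = X) : c.U = {u : P | c.M u ≤ u} := by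
  rcases c.hU with ⟨_, h⟩ | ⟨h1, _⟩
  · exact h
  · rw [hx] at h1
    exact absurd h1 X_ne_neg_one

lemma U_of_x_neg (hx : c.x = -1) : c.U = {u : P | c.M u < u} := by
  rcases c.hU with ⟨h1, _⟩ | ⟨_, h⟩
  · rw [hx] at h1
    exact absurd h1.symm X_ne_neg_one
  · exact h

lemma ne_mw_of_fix {a : P} (ha : c.M a = a) : a ≠ c.M c.w := by
  intro h
  rw [h, c.hinv] at ha
  exact c.hMw.ne ha.symm

lemma ne_mw_of_down {a : P} (ha : c.M a ⋖ a) : a ≠ c.M c.w := by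
  intro h
  rw [h, c.hinv] at ha
  exact (lt_asymm c.hMw.lt) ha.lt

lemma Qw : c.Qhat c.w = 1 := by
  classical
  have hB : c.Bhat c.w = 0 := by
    by_contra h
    exact c.hMw.lt.not_ge (c.Bhat_ne h)
  have hA : c.Ahat c.w = 1 := by
    rw [Ahat, if_pos c.hMw.le, if_neg c.hMw.ne, if_pos c.hMw.le, c.hPz1, evq_one,
      c.hPz0 c.w (c.M c.w) c.hMw.lt.not_ge, evq_zero, mul_zero, add_zero]
  rw [Qhat, hA, hB, sub_zero]

/-- the coefficient of `evq (Pz a b)` vanishes in the range dictated by `DegLtHalf`. -/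
lemma evq_Pz_bound (a b : P) (hb : b ≤ c.w) {k : ℤ}
    (hk : k < 0 ∨ ((c.ρ b : ℤ) - (c.ρ a : ℤ)) ≤ k) (hkne : k ≠ 0 ∨ a ≠ b) :
    (evq (c.Pz a b)).coeff k = 0 := by
  rcases hk with hk | hk
  · exact evq_apply_neg _ _ hk
  by_cases hab : a ≤ b
  · rcases eq_or_lt_of_le hab with rfl | hlt
    · have hk0 : k ≠ 0 := by
        rcases hkne with h | h
        · exact h
        · exact absurd rfl h
      rw [c.hPz1, evq_one, one_apply', if_neg hk0]
    · exact evq_apply_zero_of_deg (c.hPdeg a b hlt) hk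
  · rw [c.hPz0 a b hab, evq_zero]
    simp

/-- the boundary coefficient is `muC`. -/
lemma coeff_mu (a : P) :
    (evq (c.Pz a (c.M c.w))).coeff (((c.ρ (c.M c.w) : ℤ) - (c.ρ a : ℤ)) - 1) =
      muC c.ρ c.Pz a (c.M c.w) := by
  classical
  by_cases hamw : a ≤ c.M c.w
  · have hρ : c.ρ a ≤ c.ρ (c.M c.w) := c.rho_le hamw c.mw_le_w
    have hm : ((c.ρ (c.M c.w) : ℤ) - (c.ρ a : ℤ)) = ((c.ρ (c.M c.w) - c.ρ a : ℕ) : ℤ) := by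
      omega
    by_cases hpar : (c.ρ (c.M c.w) - c.ρ a) % 2 = 1
    · rw [muC, if_pos hpar]
      have he : ((c.ρ (c.M c.w) : ℤ) - (c.ρ a : ℤ)) - 1 =
          2 * (((c.ρ (c.M c.w) - c.ρ a - 1) / 2 : ℕ) : ℤ) := by omega
      rw [he, evq_apply_even]
    · rw [muC, if_neg hpar]
      by_cases h0 : c.ρ (c.M c.w) - c.ρ a = 0
      · apply evq_apply_neg
        omega
      · apply evq_apply_odd
        omega
  · rw [c.hPz0 a _ hamw, evq_zero, muC, c.hPz0 a _ hamw]
    simp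

lemma muC_of_not_le {a : P} (hamw : ¬ a ≤ c.M c.w) : muC c.ρ c.Pz a (c.M c.w) = 0 := by
  rw [muC, c.hPz0 a _ hamw]
  simp

/-- coefficient of the `T 2`-shifted second term at `k`. -/
lemma T2coeff (a : P) (haw : a ≤ c.w) (hamw : a ≠ c.M c.w) {k : ℤ}
    (hk : k < 0 ∨ ((c.ρ c.w : ℤ) - (c.ρ a : ℤ)) ≤ k) :
    (evq (c.Pz a (c.M c.w))).coeff (k - 2) =
      (if k = (c.ρ c.w : ℤ) - (c.ρ a : ℤ) then muC c.ρ c.Pz a (c.M c.w) else 0) := by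
  have hrw : c.ρ c.w = c.ρ (c.M c.w) + 1 := c.rho_w
  by_cases hkn : k = (c.ρ c.w : ℤ) - (c.ρ a : ℤ)
  · rw [if_pos hkn, hkn]
    have he : (c.ρ c.w : ℤ) - (c.ρ a : ℤ) - 2 =
        ((c.ρ (c.M c.w) : ℤ) - (c.ρ a : ℤ)) - 1 := by omega
    rw [he]
    exact c.coeff_mu a
  · rw [if_neg hkn]
    apply c.evq_Pz_bound a (c.M c.w) c.mw_le_w _ (Or.inr hamw)
    rcases hk with hk | hk
    · left; omega
    · right; omega

open Classical in
/-- coefficient of `Bhat a` at `k` in the outer range. -/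
lemma Bcoeff (a : P) (haw : a ≤ c.w) (hne : a ≠ c.w) {k : ℤ}
    (hk : k < 0 ∨ ((c.ρ c.w : ℤ) - (c.ρ a : ℤ)) ≤ k) :
    (c.Bhat a).coeff k = (if a ∈ c.U then
      (if k = (c.ρ c.w : ℤ) - (c.ρ a : ℤ) then muC c.ρ c.Pz a (c.M c.w) else 0) else 0) := by
  classical
  rw [c.Bhat_eq_sum a, AddMonoidAlgebra.coeff_sum, Finsupp.finset_sum_apply]
  have ha_mem : a ∈ c.hFin.toFinset := (Set.Finite.mem_toFinset c.hFin).2 haw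
  rw [Finset.sum_eq_single_of_mem a ha_mem]
  · by_cases hU' : a ∈ c.U
    · rw [Set.indicator_of_mem hU', if_pos hU', intCast_mul_apply, T_mul_apply,
        c.hPz1, evq_one, one_apply']
      by_cases hkn : k = (c.ρ c.w : ℤ) - (c.ρ a : ℤ)
      · rw [if_pos (by omega : k - ((c.ρ c.w : ℤ) - (c.ρ a : ℤ)) = 0), if_pos hkn, mul_one]
      · rw [if_neg (by omega : ¬ k - ((c.ρ c.w : ℤ) - (c.ρ a : ℤ)) = 0), if_neg hkn, mul_zero]
    · rw [Set.indicator_of_notMem hU', if_neg hU', zero_mul]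
      simp
  · intro u hu hua
    by_cases hU' : u ∈ c.U
    · rw [Set.indicator_of_mem hU', intCast_mul_apply, T_mul_apply]
      by_cases hμ : muC c.ρ c.Pz u (c.M c.w) = 0
      · rw [hμ]
        simp
      · have humw : u ≤ c.M c.w := c.muC_ne hμ
        have hρu : c.ρ u < c.ρ c.w := by
          have h1 : c.ρ u ≤ c.ρ (c.M c.w) := c.rho_le humw c.mw_le_w
          have h2 : c.ρ (c.M c.w) < c.ρ c.w := c.rho_lt c.hMw.lt le_rfl
          omega
        have hz : (evq (c.Pz a u)).coeff (k - ((c.ρ c.w : ℤ) - (c.ρ u : ℤ))) = 0 := by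
          by_cases hau : a ≤ u
          · have halt : a < u := lt_of_le_of_ne hau (Ne.symm hua)
            apply c.evq_Pz_bound a u (le_trans humw c.mw_le_w) _ (Or.inr (Ne.symm hua))
            rcases hk with hk | hk
            · left; omega
            · right; omega
          · rw [c.hPz0 a u hau, evq_zero]
            simp
        rw [hz, mul_zero]
    · rw [Set.indicator_of_notMem hU', zero_mul]
      simp

/-- The key support bound for `Qhat`. -/
lemma Qbound (a : P) (haw : a ≤ c.w) (hne : a ≠ c.w) {k : ℤ}
    (hk : k < 0 ∨ ((c.ρ c.w : ℤ) - (c.ρ a : ℤ)) ≤ k) : (c.Qhat a).coeff k = 0 := by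
  classical
  have hrw : c.ρ c.w = c.ρ (c.M c.w) + 1 := c.rho_w
  have hn1 : (c.ρ a : ℤ) < (c.ρ c.w : ℤ) := by
    exact_mod_cast c.rho_lt (lt_of_le_of_ne haw hne) le_rfl
  have hk0 : k ≠ 0 ∨ (0:ℤ) > k := by
    rcases hk with h | h
    · right; omega
    · left; omega
  have hk0' : k ≠ 0 := by
    rcases hk with h | h
    · omega
    · omega
  rw [Qhat, AddMonoidAlgebra.coeff_sub, Finsupp.sub_apply, Ahat, AddMonoidAlgebra.coeff_add, Finsupp.add_apply]
  rcases c.htri a with ha | ha | ha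
  · -- M a ⋖ a : a ∈ U in both conventions
    have haU : a ∈ c.U := by
      rcases c.hxz with ⟨hx, _⟩ | ⟨hx, _⟩
      · rw [c.U_of_x_X hx]; exact ha.le
      · rw [c.U_of_x_neg hx]; exact ha.lt
    have hraM : c.ρ a = c.ρ (c.M a) + 1 := c.hρcov _ _ ha
    have h1 : (evq (c.Pz (if c.M a ≤ a then c.M a else a) (c.M c.w))).coeff k = 0 := by
      rw [if_pos ha.le]
      apply c.evq_Pz_bound (c.M a) (c.M c.w) c.mw_le_w _ (Or.inl hk0')
      rcases hk with h | h
      · left; exact h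
      · right; omega
    have h2 : ((evq (if c.M a = a then c.x else X)) * evq (c.Pz (if c.M a ≤ a then a else c.M a) (c.M c.w))).coeff k
        = (if k = (c.ρ c.w : ℤ) - (c.ρ a : ℤ) then muC c.ρ c.Pz a (c.M c.w) else 0) := by
      rw [if_neg ha.ne, if_pos ha.le, evq_X, T_mul_apply]
      exact c.T2coeff a haw (c.ne_mw_of_down ha) hk
    rw [h1, h2, c.Bcoeff a haw hne hk, if_pos haU, zero_add, sub_self]
  · -- M a = a
    have h1 : (evq (c.Pz (if c.M a ≤ a then c.M a else a) (c.M c.w))).coeff k = 0 := by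
      have he : (if c.M a ≤ a then c.M a else a) = a := by rw [ha]; simp
      rw [he]
      apply c.evq_Pz_bound a (c.M c.w) c.mw_le_w _ (Or.inl hk0')
      rcases hk with h | h
      · left; exact h
      · right; omega
    have he2 : (if c.M a ≤ a then a else c.M a) = a := by rw [ha]; simp
    rcases c.hxz with ⟨hx, _⟩ | ⟨hx, _⟩
    · -- x = X : a ∈ U
      have haU : a ∈ c.U := by rw [c.U_of_x_X hx]; exact le_of_eq ha
      have h2 : ((evq (if c.M a = a then c.x else X)) * evq (c.Pz (if c.M a ≤ a then a else c.M a) (c.M c.w))).coeff k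
          = (if k = (c.ρ c.w : ℤ) - (c.ρ a : ℤ) then muC c.ρ c.Pz a (c.M c.w) else 0) := by
        rw [if_pos ha, he2, hx, evq_X, T_mul_apply]
        exact c.T2coeff a haw (c.ne_mw_of_fix ha) hk
      rw [h1, h2, c.Bcoeff a haw hne hk, if_pos haU, zero_add, sub_self]
    · -- x = -1 : a ∉ U
      have haU : a ∉ c.U := by
        rw [c.U_of_x_neg hx]
        simp only [Set.mem_setOf_eq, ha]
        exact lt_irrefl a
      have h2 : ((evq (if c.M a = a then c.x else X)) * evq (c.Pz (if c.M a ≤ a then a else c.M a) (c.M c.w))).coeff k = 0 := by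
        rw [if_pos ha, he2, hx, evq_neg_one, neg_one_mul, AddMonoidAlgebra.coeff_neg, Finsupp.neg_apply]
        have : (evq (c.Pz a (c.M c.w))).coeff k = 0 := by
          apply c.evq_Pz_bound a (c.M c.w) c.mw_le_w _ (Or.inr (c.ne_mw_of_fix ha))
          rcases hk with h | h
          · left; exact h
          · right; omega
        rw [this, neg_zero]
      rw [h1, h2, c.Bcoeff a haw hne hk, if_neg haU, zero_add, sub_self]
  · -- a ⋖ M a : a ∉ U
    have hMa : ¬ c.M a ≤ a := ha.lt.not_ge
    have haU : a ∉ c.U := by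
      rcases c.hxz with ⟨hx, _⟩ | ⟨hx, _⟩
      · rw [c.U_of_x_X hx]; exact hMa
      · rw [c.U_of_x_neg hx]
        simp only [Set.mem_setOf_eq]
        exact fun h => hMa h.le
    have hraM : c.ρ (c.M a) = c.ρ a + 1 := c.hρcov _ _ ha
    have h1 : (evq (c.Pz (if c.M a ≤ a then c.M a else a) (c.M c.w))).coeff k = 0 := by
      rw [if_neg hMa]
      apply c.evq_Pz_bound a (c.M c.w) c.mw_le_w _ (Or.inl hk0')
      rcases hk with h | h
      · left; exact h
      · right; omega
    have h2 : ((evq (if c.M a = a then c.x else X)) * evq (c.Pz (if c.M a ≤ a then a else c.M a) (c.M c.w))).coeff k = 0 := by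
      rw [if_neg ha.ne', if_neg hMa, evq_X, T_mul_apply]
      have hMamw : c.M a ≠ c.M c.w := fun h => hne (c.Minj h)
      apply c.evq_Pz_bound (c.M a) (c.M c.w) c.mw_le_w _ (Or.inr hMamw)
      rcases hk with h | h
      · left; omega
      · right; omega
    rw [h1, h2, c.Bcoeff a haw hne hk, if_neg haU, zero_add, sub_self]

/-- Main induction: `Qhat` computes the KLS polynomials. -/
lemma KEY : ∀ n : ℕ, ∀ a : P, a ≤ c.w → c.ρ c.w = c.ρ a + n → c.Qhat a = evq (c.Pz a c.w) := by
  classical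
  intro n
  induction n using Nat.strong_induction_on with
  | _ n IH =>
    intro a haw hn
    by_cases hne : a = c.w
    · rw [hne, c.Qw, c.hPz1, evq_one]
    have halt : a < c.w := lt_of_le_of_ne haw hne
    have hIcc : (Set.Icc a c.w).Finite := c.hFin.subset (fun t ht => ht.2)
    have hsubQ : Function.support (fun t => evq (c.Rz a t) * c.Qhat t) ⊆ ↑hIcc.toFinset := by
      intro t ht
      simp only [Function.mem_support] at ht
      have h1 : a ≤ t := c.evq_Rz_ne (left_ne_zero_of_mul ht)
      have hQ : c.Qhat t ≠ 0 := right_ne_zero_of_mul ht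
      have h2 : t ≤ c.w := by
        rw [Qhat] at hQ
        have : c.Ahat t ≠ 0 ∨ c.Bhat t ≠ 0 := by
          by_contra hcon
          push_neg at hcon
          rw [hcon.1, hcon.2, sub_zero] at hQ
          exact hQ rfl
        rcases this with h | h
        · rcases c.Ahat_ne h with h' | h'
          · exact le_trans h' c.mw_le_w
          · have := c.lift (le_trans h' c.mw_le_w)
            rwa [c.hinv] at this
        · exact le_trans (c.Bhat_ne h) c.mw_le_w
      rw [Finset.mem_coe, Set.Finite.mem_toFinset]
      exact ⟨h1, h2⟩
    have hstar := c.STAR a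
    rw [finsum_eq_finset_sum_of_support_subset _ hsubQ] at hstar
    have hfe := c.hPfe a c.w haw
    rw [finsum_mem_eq_finite_toFinset_sum _ hIcc] at hfe
    have hdiff : (∑ t ∈ hIcc.toFinset, (evq (c.Rz a t) * evq (c.Pz t c.w) -
        evq (c.Rz a t) * c.Qhat t)) =
        T (2 * ((c.ρ c.w : ℤ) - (c.ρ a : ℤ))) * invert (evq (c.Pz a c.w) - c.Qhat a) := by
      rw [Finset.sum_sub_distrib, ← hfe, hstar, map_sub]
      ring
    have hsingle : (∑ t ∈ hIcc.toFinset, (evq (c.Rz a t) * evq (c.Pz t c.w) -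
        evq (c.Rz a t) * c.Qhat t)) = evq (c.Pz a c.w) - c.Qhat a := by
      have hamem : a ∈ hIcc.toFinset := (Set.Finite.mem_toFinset hIcc).2 ⟨le_refl a, haw⟩
      rw [Finset.sum_eq_single_of_mem a hamem]
      · rw [c.hRz1, evq_one, one_mul, one_mul]
      · intro t htmem htne
        have htIcc := (Set.Finite.mem_toFinset hIcc).1 htmem
        have halt' : a < t := lt_of_le_of_ne htIcc.1 (Ne.symm htne)
        have hρ1 : c.ρ a < c.ρ t := c.rho_lt halt' htIcc.2
        have hρ2 : c.ρ t ≤ c.ρ c.w := c.rho_le htIcc.2 le_rfl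
        have := IH (c.ρ c.w - c.ρ t) (by omega) t htIcc.2 (by omega)
        rw [this, sub_self]
    have hE : evq (c.Pz a c.w) - c.Qhat a =
        T (2 * ((c.ρ c.w : ℤ) - (c.ρ a : ℤ))) * invert (evq (c.Pz a c.w) - c.Qhat a) := by
      rw [← hdiff, hsingle]
    have hn1 : (c.ρ a : ℤ) < (c.ρ c.w : ℤ) := by exact_mod_cast c.rho_lt halt le_rfl
    have hEk : ∀ k : ℤ, (k < 0 ∨ ((c.ρ c.w : ℤ) - (c.ρ a : ℤ)) ≤ k) →
        (evq (c.Pz a c.w) - c.Qhat a).coeff k = 0 := by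
      intro k hk
      rw [AddMonoidAlgebra.coeff_sub, Finsupp.sub_apply]
      have hP : (evq (c.Pz a c.w)).coeff k = 0 := by
        rcases hk with hk | hk
        · exact evq_apply_neg _ _ hk
        · exact evq_apply_zero_of_deg (c.hPdeg a c.w halt) hk
      rw [hP, c.Qbound a haw hne hk, sub_self]
    have hall : ∀ k : ℤ, (evq (c.Pz a c.w) - c.Qhat a).coeff k = 0 := by
      intro k
      by_cases hk : k < 0 ∨ ((c.ρ c.w : ℤ) - (c.ρ a : ℤ)) ≤ k
      · exact hEk k hk
      · push_neg at hk
        have h1 : (evq (c.Pz a c.w) - c.Qhat a).coeff k =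
            (evq (c.Pz a c.w) - c.Qhat a).coeff (2 * ((c.ρ c.w : ℤ) - (c.ρ a : ℤ)) - k) := by
          conv_lhs => rw [hE]
          rw [T_mul_apply, invert_apply]
          congr 1
          ring
        rw [h1]
        apply hEk
        right
        omega
    have hzero : evq (c.Pz a c.w) - c.Qhat a = 0 := by
      apply LaurentPolynomial.ext
      intro k
      rw [hall k]
      simp
    have := sub_eq_zero.1 hzero
    exact this.symm

end Ctx


end KLSaux
/-- Recursion for the Kazhdan--Lusztig--Stanley polynomials of a pircon system: for
`v ≤ w`, `M ∈ S` with `M(w) ⋖ w`, `v' = min{v, M(v)}`, `v'' = max{v, M(v)}`, and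
`x_v = x` if `M(v) = v` and `x_v = q` otherwise,
`P^z_{v,w} = P^z_{v',M(w)} + x_v·P^z_{v'',M(w)} - Σ_u μ(u,M(w))·q^{ρ(u,w)/2}·P^z_{v,u}`,
the sum being over `{u : M(u) ≤ u}` if `x = q` and over `{u : M(u) < u}` if `x = -1`. -/
theorem KLS_recursion {P : Type*} [PartialOrder P] [OrderBot P]
    (ρ : P → ℕ) (hρ0 : ρ (⊥ : P) = 0) (hρcov : ∀ a b : P, a ⋖ b → ρ b = ρ a + 1)
    (hP : IsPircon P) {S : Set (P → P)} (hS : IsPirconSystem S)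
    {x z : Polynomial ℤ} (hxz : (x = X ∧ z = -1) ∨ (x = -1 ∧ z = X))
    {Rx Rz : P → P → Polynomial ℤ}
    (hRx : IsKLRFamily S x Rx) (hRz : IsKLRFamily S z Rz)
    (hudx : UpDownSymmetry S x Rx) (hudz : UpDownSymmetry S z Rz)
    {Pz : P → P → Polynomial ℤ} (hPz : IsKLSFamily ρ Rz Pz)
    {v w : P} (hvw : v ≤ w) {M : P → P} (hM : M ∈ S) (hMw : M w ⋖ w)
    {v' v'' : P}
    (hmin : (v' = M v ∧ v'' = v ∧ M v ≤ v) ∨ (v' = v ∧ v'' = M v ∧ v ≤ M v))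
    {xv : Polynomial ℤ} (hxv : (M v = v ∧ xv = x) ∨ (M v ≠ v ∧ xv = X))
    {U : Set P}
    (hU : (x = X ∧ U = {u : P | M u ≤ u}) ∨ (x = -1 ∧ U = {u : P | M u < u})) :
    evq (Pz v w) = evq (Pz v' (M w)) + evq xv * evq (Pz v'' (M w)) -
      ∑ᶠ u ∈ U, ((muC ρ Pz u (M w) : ℤ) : LaurentPolynomial ℤ) *
        (T ((ρ w : ℤ) - (ρ u : ℤ)) * evq (Pz v u)) := by
  classical
  obtain ⟨hQSPM, -⟩ := hS
  obtain ⟨hinvol, htri, hspm⟩ := hQSPM M hM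
  have hnotmin : ¬ IsMin w := fun h => hMw.lt.not_ge (h hMw.le)
  have hFin : (Set.Iic w).Finite := (hP w hnotmin).1
  let c : KLSaux.Ctx P :=
    { ρ := ρ, x := x, z := z, Rz := Rz, Pz := Pz, M := M, U := U, w := w
      hρcov := hρcov, hxz := hxz
      hRz0 := hRz.1, hRz1 := hRz.2.1
      hrec := fun u v hv => hRz.2.2 M hM u v hv
      hud := fun u v hu => hudz M hM u v hu
      hPz0 := hPz.1, hPz1 := hPz.2.1, hPdeg := hPz.2.2.1, hPfe := hPz.2.2.2
      hinv := hinvol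
      htri := htri, hspm := hspm, hMw := hMw, hFin := hFin, hU := hU }
  have hle : ρ v ≤ ρ w := c.rho_le hvw le_rfl
  have hkey : c.Qhat v = evq (Pz v w) :=
    c.KEY (ρ w - ρ v) v hvw (show ρ w = ρ v + (ρ w - ρ v) by omega)
  rw [← hkey]
  have hBv : c.Bhat v = ∑ᶠ u ∈ U, ((muC ρ Pz u (M w) : ℤ) : LaurentPolynomial ℤ) *
      (T ((ρ w : ℤ) - (ρ u : ℤ)) * evq (Pz v u)) := rfl
  have h1 : (if M v ≤ v then M v else v) = v' := by
    rcases hmin with ⟨h1', _, h3'⟩ | ⟨h1', _, h3'⟩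
    · rw [if_pos h3', h1']
    · by_cases hMv : M v ≤ v
      · have heq : M v = v := le_antisymm hMv h3'
        rw [if_pos hMv, h1', heq]
      · rw [if_neg hMv, h1']
  have h2 : (if M v ≤ v then v else M v) = v'' := by
    rcases hmin with ⟨_, h2', h3'⟩ | ⟨_, h2', h3'⟩
    · rw [if_pos h3', h2']
    · by_cases hMv : M v ≤ v
      · have heq : M v = v := le_antisymm hMv h3'
        rw [if_pos hMv, h2', heq]
      · rw [if_neg hMv, h2']
  have h3 : (if M v = v then x else X) = xv := by
    rcases hxv with ⟨hf, hxv'⟩ | ⟨hf, hxv'⟩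
    · rw [if_pos hf, hxv']
    · rw [if_neg hf, hxv']
  have hAv : c.Ahat v = evq (Pz v' (M w)) + evq xv * evq (Pz v'' (M w)) := by
    show evq (Pz (if M v ≤ v then M v else v) (M w)) +
        evq (if M v = v then x else X) * evq (Pz (if M v ≤ v then v else M v) (M w)) = _
    rw [h1, h2, h3]
  show c.Ahat v - c.Bhat v = _
  rw [hAv, hBv]


end
end
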